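/- arXiv:1910.11453 — 8 statements merged into one kernel-verified Lean document; each statement's English description precedes it below -/
import Mathlib

section
/- Let K be a group generated by e elements and let N be a finite normal subgroup of K. If k_1, …, k_e ∈ K are elements such that the cosets k_1N, …, k_eN generate the quotient group K/N, then there exist n_1, …, n_e ∈ N such that the elements k_1n_1, …, k_en_e generate K. -/
namespace GaschutzAux

open Subgroup Set Pointwise

variable {K : Type*} [Group K] {e : ℕ}

variable (N : Subgroup K) in
/-- number of correction tuples `n` with `⟨k i * n i⟩ = H`. -/
noncomputable def phi (k : Fin e → K) (H : Subgroup K) : ℕ :=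
  Nat.card {n : Fin e → N // Subgroup.closure (Set.range fun i => k i * (n i : K)) = H}

variable {N : Subgroup K} [N.Normal]

lemma map_mk_closure (k : Fin e → K) (n : Fin e → N) :
    (Subgroup.closure (Set.range fun i => k i * (n i : K))).map (QuotientGroup.mk' N)
      = Subgroup.closure (Set.range fun i => ((k i : K) : K ⧸ N)) := by
  rw [MonoidHom.map_closure, ← Set.range_comp]
  refine congrArg _ (congrArg _ (funext fun i => ?_))
  exact QuotientGroup.mk_mul_of_mem (k i) (n i).2

lemma closure_sup_eq_top {k : Fin e → K}
    (hk : Subgroup.closure (Set.range fun i => ((k i : K) : K ⧸ N)) = ⊤)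
    (n : Fin e → N) :
    Subgroup.closure (Set.range fun i => k i * (n i : K)) ⊔ N = ⊤ := by
  have h1 := map_mk_closure k n
  rw [hk] at h1
  have h2 := congrArg (Subgroup.comap (QuotientGroup.mk' N)) h1
  rwa [Subgroup.comap_map_eq, QuotientGroup.ker_mk', Subgroup.comap_top] at h2

lemma coord_card {H : Subgroup K} {g : K} (hg : ∃ m : N, g * (m : K) ∈ H) :
    Nat.card {n : N // g * (n : K) ∈ H} = Nat.card (H ⊓ N : Subgroup K) := by
  obtain ⟨m, hm⟩ := hg
  have memfun : ∀ n : {n : N // g * (n : K) ∈ H}, (m : K)⁻¹ * (n.1 : K) ∈ H ⊓ N := by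
    intro n
    refine Subgroup.mem_inf.2 ⟨?_, mul_mem (inv_mem m.2) (n.1).2⟩
    have := mul_mem (inv_mem hm) n.2
    simpa [mul_assoc] using this
  refine Nat.card_eq_of_bijective (fun n => ⟨(m : K)⁻¹ * (n.1 : K), memfun n⟩) ⟨?_, ?_⟩
  · intro a b hab
    have := congrArg Subtype.val hab
    simp only at this
    exact Subtype.ext (Subtype.ext (mul_left_cancel this))
  · rintro ⟨x, hx⟩
    have hxN : x ∈ N := (Subgroup.mem_inf.1 hx).2
    have hgH : g * ((m : K) * x) ∈ H := by
      rw [← mul_assoc]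
      exact mul_mem hm (Subgroup.mem_inf.1 hx).1
    refine ⟨⟨⟨(m : K) * x, mul_mem m.2 hxN⟩, hgH⟩, ?_⟩
    ext
    simp [mul_assoc]

lemma count_mem {H : Subgroup K} (hH : H ⊔ N = ⊤) (k : Fin e → K) :
    Nat.card {n : Fin e → N // ∀ i, k i * (n i : K) ∈ H}
      = Nat.card (H ⊓ N : Subgroup K) ^ e := by
  have key : ∀ g : K, ∃ m : N, g * (m : K) ∈ H := by
    intro g
    have hg : g ∈ (H : Set K) * (N : Set K) := by
      rw [← Subgroup.mul_normal, hH]; trivial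
    obtain ⟨h, hh, mm, hmm, rfl⟩ := hg
    exact ⟨⟨mm, hmm⟩⁻¹, by simpa [mul_assoc] using hh⟩
  rw [Nat.card_congr (Equiv.subtypePiEquivPi (p := fun i (x : N) => k i * (x : K) ∈ H)),
    Nat.card_pi]
  simp [coord_card (key _)]

lemma inf_lt_inf {H' H : Subgroup K} (hlt : H' < H) (h1 : H' ⊔ N = ⊤) :
    H' ⊓ N < H ⊓ N := by
  refine lt_of_le_of_ne (inf_le_inf_right _ hlt.le) fun heq => hlt.ne ?_
  refine le_antisymm hlt.le fun h hh => ?_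
  have hmem : h ∈ (H' : Set K) * (N : Set K) := by
    rw [← Subgroup.mul_normal, h1]; trivial
  obtain ⟨a, ha, mm, hmm, rfl⟩ := hmem
  have hmH : mm ∈ H := by
    have := mul_mem (inv_mem (hlt.le ha)) hh
    simpa [mul_assoc] using this
  have : mm ∈ H' ⊓ N := heq ▸ (Subgroup.mem_inf.2 ⟨hmH, hmm⟩)
  exact mul_mem ha this.1

lemma card_inf_lt [Finite N] {H' H : Subgroup K} (h : H' ⊓ N < H ⊓ N) :
    Nat.card (H' ⊓ N : Subgroup K) < Nat.card (H ⊓ N : Subgroup K) := by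
  rw [show Nat.card (H' ⊓ N : Subgroup K) = ((H' ⊓ N : Subgroup K) : Set K).ncard from
      Nat.card_coe_set_eq _,
    show Nat.card (H ⊓ N : Subgroup K) = ((H ⊓ N : Subgroup K) : Set K).ncard from
      Nat.card_coe_set_eq _]
  refine Set.ncard_lt_ncard (SetLike.coe_ssubset_coe.2 h) ?_
  have hNfin : (N : Set K).Finite := Set.toFinite _
  exact hNfin.subset (by simp)

lemma partition [Fintype N] [DecidableEq (Subgroup K)] (k : Fin e → K) (H : Subgroup K) (F : Finset (Subgroup K))
    (hmem : ∀ n : Fin e → N, (∀ i, k i * (n i : K) ∈ H) →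
       Subgroup.closure (Set.range fun i => k i * (n i : K)) ∈ insert H F)
    (hle : ∀ H' ∈ insert H F, H' ≤ H) (hHF : H ∉ F) :
    Nat.card {n : Fin e → N // ∀ i, k i * (n i : K) ∈ H}
      = phi N k H + ∑ H' ∈ F, phi N k H' := by
  classical
  set c : (Fin e → N) → Subgroup K :=
    fun n => Subgroup.closure (Set.range fun i => k i * (n i : K)) with hc
  set T : Finset (Fin e → N) := Finset.univ.filter (fun n => ∀ i, k i * (n i : K) ∈ H) with hT
  have h1 : Nat.card {n : Fin e → N // ∀ i, k i * (n i : K) ∈ H} = T.card := by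
    rw [Nat.card_eq_fintype_card, Fintype.card_subtype]
  have h2 : T.card = ∑ H' ∈ insert H F, (T.filter (fun n => c n = H')).card :=
    Finset.card_eq_sum_card_fiberwise fun n hn => hmem n (by simpa [hT] using hn)
  have h3 : ∀ H' ∈ insert H F, (T.filter (fun n => c n = H')).card = phi N k H' := by
    intro H' hH'
    have hfib : T.filter (fun n => c n = H') = Finset.univ.filter (fun n => c n = H') := by
      ext n
      simp only [hT, Finset.mem_filter, Finset.mem_univ, true_and]
      refine ⟨fun h => h.2, fun h => ⟨fun i => ?_, h⟩⟩
      have : k i * (n i : K) ∈ c n := Subgroup.subset_closure ⟨i, rfl⟩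
      exact hle H' hH' (h ▸ this)
    rw [hfib, phi, Nat.card_eq_fintype_card, Fintype.card_subtype]
  rw [h1, h2, Finset.sum_congr rfl h3, Finset.sum_insert hHF]

lemma phi_eq [Fintype N] {k k' : Fin e → K}
    (hk : Subgroup.closure (Set.range fun i => ((k i : K) : K ⧸ N)) = ⊤)
    (hk' : Subgroup.closure (Set.range fun i => ((k' i : K) : K ⧸ N)) = ⊤) :
    ∀ (H : Subgroup K), H ⊔ N = ⊤ → phi N k H = phi N k' H := by
  classical
  suffices h : ∀ m (H : Subgroup K), Nat.card (H ⊓ N : Subgroup K) = m → H ⊔ N = ⊤ →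
      phi N k H = phi N k' H from fun H hH => h _ H rfl hH
  intro m
  induction m using Nat.strong_induction_on with
  | _ m ih =>
  intro H hcard hH
  set c : (Fin e → N) → Subgroup K :=
    fun n => Subgroup.closure (Set.range fun i => k i * (n i : K)) with hc
  set c' : (Fin e → N) → Subgroup K :=
    fun n => Subgroup.closure (Set.range fun i => k' i * (n i : K)) with hc'
  set T : Finset (Fin e → N) := Finset.univ.filter (fun n => ∀ i, k i * (n i : K) ∈ H) with hT
  set T' : Finset (Fin e → N) := Finset.univ.filter (fun n => ∀ i, k' i * (n i : K) ∈ H) with hT'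
  set F : Finset (Subgroup K) :=
    (T.image c ∪ T'.image c').filter (fun H' => H' < H) with hF
  have hHF : H ∉ F := by simp [hF]
  have hmemk : ∀ n : Fin e → N, (∀ i, k i * (n i : K) ∈ H) → c n ∈ insert H F := by
    intro n hn
    have hle : c n ≤ H := (Subgroup.closure_le _).2 (by rintro x ⟨i, rfl⟩; exact hn i)
    rcases eq_or_lt_of_le hle with h | h
    · simp [h]
    · refine Finset.mem_insert_of_mem (Finset.mem_filter.2 ⟨Finset.mem_union_left _ ?_, h⟩)
      exact Finset.mem_image_of_mem c (by simp [hT, hn])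
  have hmemk' : ∀ n : Fin e → N, (∀ i, k' i * (n i : K) ∈ H) → c' n ∈ insert H F := by
    intro n hn
    have hle : c' n ≤ H := (Subgroup.closure_le _).2 (by rintro x ⟨i, rfl⟩; exact hn i)
    rcases eq_or_lt_of_le hle with h | h
    · simp [h]
    · refine Finset.mem_insert_of_mem (Finset.mem_filter.2 ⟨Finset.mem_union_right _ ?_, h⟩)
      exact Finset.mem_image_of_mem c' (by simp [hT', hn])
  have hleF : ∀ H' ∈ insert H F, H' ≤ H := by
    intro H' hH'
    rcases Finset.mem_insert.1 hH' with h | h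
    · exact h.le
    · exact (Finset.mem_filter.1 h).2.le
  have e1 := partition k H F hmemk hleF hHF
  have e2 := partition k' H F hmemk' hleF hHF
  rw [count_mem hH k] at e1
  rw [count_mem hH k'] at e2
  have hsum : ∑ H' ∈ F, phi N k H' = ∑ H' ∈ F, phi N k' H' := by
    refine Finset.sum_congr rfl fun H' hH' => ?_
    have hlt : H' < H := (Finset.mem_filter.1 hH').2
    by_cases htop : H' ⊔ N = ⊤
    · exact ih _ (hcard ▸ card_inf_lt (inf_lt_inf hlt htop)) H' rfl htop
    · have z1 : phi N k H' = 0 := by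
        rw [phi, Nat.card_eq_zero]
        refine Or.inl ⟨fun x => htop ?_⟩
        exact x.2 ▸ closure_sup_eq_top hk x.1
      have z2 : phi N k' H' = 0 := by
        rw [phi, Nat.card_eq_zero]
        refine Or.inl ⟨fun x => htop ?_⟩
        exact x.2 ▸ closure_sup_eq_top hk' x.1
      rw [z1, z2]
  omega

end GaschutzAux

/-- **Gaschütz's lemma.** If `K` is a group generated by `e` elements, `N` is a finite normal
subgroup, and the cosets `k i * N` generate `K ⧸ N`, then the `k i` can be corrected by elements
`n i ∈ N` so that the `k i * n i` generate `K`. -/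
theorem stmt_0 (e : ℕ) (he : 0 < e) (K : Type*) [Group K]
    (hK : ∃ f : Fin e → K, Subgroup.closure (Set.range f) = ⊤)
    (N : Subgroup K) [N.Normal] (hN : (N : Set K).Finite)
    (k : Fin e → K)
    (hk : Subgroup.closure (Set.range fun i => ((k i : K) : K ⧸ N)) = ⊤) :
    ∃ n : Fin e → K, (∀ i, n i ∈ N) ∧
      Subgroup.closure (Set.range fun i => k i * n i) = ⊤ := by
  classical
  have hfin : Finite N := hN.to_subtype
  have : Fintype N := Fintype.ofFinite _
  obtain ⟨f, hf⟩ := hK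
  have hfP : Subgroup.closure (Set.range fun i => ((f i : K) : K ⧸ N)) = ⊤ := by
    have h1 : (Subgroup.closure (Set.range f)).map (QuotientGroup.mk' N)
        = Subgroup.closure (Set.range fun i => ((f i : K) : K ⧸ N)) := by
      rw [MonoidHom.map_closure, ← Set.range_comp]; rfl
    rw [← h1, hf, Subgroup.map_top_of_surjective _ (QuotientGroup.mk'_surjective N)]
  have hphi := GaschutzAux.phi_eq hfP hk ⊤ (by simp)
  have hpos : 0 < GaschutzAux.phi N f ⊤ := by
    rw [GaschutzAux.phi]
    refine Nat.card_pos_iff.2 ⟨⟨⟨fun _ => 1, by simpa using hf⟩⟩, ?_⟩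
    infer_instance
  rw [hphi] at hpos
  obtain ⟨⟨n, hn⟩, -⟩ := Nat.card_pos_iff.1 hpos
  exact ⟨fun i => (n i : K), fun i => (n i).2, hn⟩
end

section
/- Let p be a prime and let H be a finite group generated by e elements. Then there exist a finite group Ĥ generated by e elements and a surjective homomorphism π: Ĥ → H whose kernel is an elementary abelian p-group, such that for every finite group L generated by e elements and every surjective homomorphism τ: L → H whose kernel is an elementary abelian p-group, there exists a surjective homomorphism σ: Ĥ → L with τ ∘ σ = π. -/
open Subgroup Function Set

lemma pow_mod_of_exp {K : Type*} [Group K] {p : ℕ} (g : K) (hg : g ^ p = 1) (n : ℕ) :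
    g ^ (n % p) = g ^ n := by
  conv_rhs => rw [← Nat.div_add_mod n p]
  rw [pow_add, pow_mul, hg, one_pow, one_mul]

lemma elemab_finite {K : Type*} [CommGroup K] {p : ℕ} (hp : 1 < p)
    (hexp : ∀ g : K, g ^ p = 1) (S : Finset K)
    (hS : Subgroup.closure (S : Set K) = ⊤) : Finite K := by
  haveI : NeZero p := ⟨by omega⟩
  classical
  set f : ({x // x ∈ S} → ZMod p) → K := fun a => ∏ s : {x // x ∈ S}, (s : K) ^ (a s).val with hf
  have hmul : ∀ a b, f a * f b = f (a + b) := by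
    intro a b
    rw [hf]
    simp only
    rw [← Finset.prod_mul_distrib]
    refine Finset.prod_congr rfl fun s _ => ?_
    rw [← pow_add, Pi.add_apply, ZMod.val_add, pow_mod_of_exp _ (hexp _)]
  have h0 : f 0 = 1 := by
    rw [hf]; simp
  let R : Subgroup K :=
    { carrier := Set.range f
      one_mem' := ⟨0, h0⟩
      mul_mem' := by
        rintro x y ⟨a, rfl⟩ ⟨b, rfl⟩
        exact ⟨a + b, (hmul a b).symm⟩
      inv_mem' := by
        rintro x ⟨a, rfl⟩
        refine ⟨-a, eq_inv_of_mul_eq_one_left ?_⟩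
        rw [hmul, neg_add_cancel, h0] }
  have hle : Subgroup.closure (S : Set K) ≤ R := by
    rw [Subgroup.closure_le]
    intro s hs
    refine ⟨Pi.single ⟨s, hs⟩ 1, ?_⟩
    rw [hf]
    simp only
    rw [Fintype.prod_eq_single (⟨s, hs⟩ : {x // x ∈ S})]
    · simp [ZMod.val_one_eq_one_mod, Nat.mod_eq_of_lt hp]
    · intro t ht
      rw [Pi.single_eq_of_ne ht]
      simp
  rw [hS] at hle
  have hsurj : Surjective f := fun g => hle (Subgroup.mem_top g)
  exact Finite.of_surjective f hsurj


section Gaschutz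
open scoped Classical

variable {L H : Type*} [Group L] [Group H] [Finite L] {e : ℕ}

/-- number of lifts of `h` generating exactly `U`. -/
private noncomputable def cnt (τ : L →* H) (h : Fin e → H) (U : Subgroup L) : ℕ :=
  Nat.card {x : Fin e → L // τ ∘ x = h ∧ Subgroup.closure (Set.range x) = U}

private lemma nat_card_sigma {ι : Type*} [Fintype ι] (f : ι → Type*) [∀ i, Finite (f i)] :
    Nat.card (Σ i, f i) = ∑ i, Nat.card (f i) := by
  letI := fun i => Fintype.ofFinite (f i)
  simp [Nat.card_eq_fintype_card]

private lemma sumA (τ : L →* H) (h : Fin e → H) (U : Subgroup L) :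
    Nat.card {x : Fin e → L // τ ∘ x = h ∧ ∀ i, x i ∈ U}
      = ∑ᶠ V : Subgroup L, if V ≤ U then cnt τ h V else 0 := by
  classical
  haveI : Finite (Subgroup L) :=
    Finite.of_injective (fun U : Subgroup L => (U : Set L)) SetLike.coe_injective
  letI : Fintype (Subgroup L) := Fintype.ofFinite _
  rw [finsum_eq_sum_of_fintype]
  have e1 : {x : Fin e → L // τ ∘ x = h ∧ ∀ i, x i ∈ U}
      ≃ Σ V : Subgroup L,
        {y : {x : Fin e → L // τ ∘ x = h ∧ ∀ i, x i ∈ U} //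
          Subgroup.closure (Set.range y.1) = V} :=
    (Equiv.sigmaFiberEquiv _).symm
  rw [Nat.card_congr e1, nat_card_sigma]
  refine Finset.sum_congr rfl fun V _ => ?_
  by_cases hVU : V ≤ U
  · rw [if_pos hVU]
    refine Nat.card_congr ?_
    refine ⟨fun y => ⟨y.1.1, y.1.2.1, y.2⟩, fun x => ⟨⟨x.1, x.2.1, fun i => ?_⟩, x.2.2⟩,
      fun y => rfl, fun x => rfl⟩
    have hm : x.1 i ∈ Subgroup.closure (Set.range x.1) :=
      subset_closure (mem_range_self i)
    rw [x.2.2] at hm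
    exact hVU hm
  · rw [if_neg hVU]
    rw [Nat.card_eq_zero]
    left
    constructor
    rintro ⟨⟨x, hx1, hx2⟩, hx3⟩
    refine hVU ?_
    rw [← hx3]
    exact (Subgroup.closure_le U).2 (range_subset_iff.2 hx2)

private lemma A_invariant (τ : L →* H) {h h' : Fin e → H}
    (hgen : Subgroup.closure (Set.range h) = ⊤)
    (hgen' : Subgroup.closure (Set.range h') = ⊤) (U : Subgroup L) :
    Nat.card {x : Fin e → L // τ ∘ x = h ∧ ∀ i, x i ∈ U}
      = Nat.card {x : Fin e → L // τ ∘ x = h' ∧ ∀ i, x i ∈ U} := by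
  classical
  have key : ∀ (k : Fin e → H), Subgroup.closure (Set.range k) = ⊤ →
      Nat.card {x : Fin e → L // τ ∘ x = k ∧ ∀ i, x i ∈ U}
        = if U.map τ = ⊤ then (Nat.card {y : L // τ y = 1 ∧ y ∈ U}) ^ e else 0 := by
    intro k hk
    have e2 : {x : Fin e → L // τ ∘ x = k ∧ ∀ i, x i ∈ U}
        ≃ ∀ i : Fin e, {y : L // τ y = k i ∧ y ∈ U} := by
      refine (Equiv.subtypeEquivRight ?_).trans (Equiv.subtypePiEquivPi)
      intro x
      rw [funext_iff, forall_and]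
      tauto
    rw [Nat.card_congr e2, Nat.card_pi]
    by_cases hmap : U.map τ = ⊤
    · rw [if_pos hmap]
      have hfib : ∀ i, Nat.card {y : L // τ y = k i ∧ y ∈ U}
          = Nat.card {y : L // τ y = 1 ∧ y ∈ U} := by
        intro i
        have : k i ∈ U.map τ := by rw [hmap]; exact Subgroup.mem_top _
        obtain ⟨u, hu, hτu⟩ := this
        refine Nat.card_congr ⟨fun y => ⟨y.1 * u⁻¹, ?_, ?_⟩, fun z => ⟨z.1 * u, ?_, ?_⟩,
          fun y => ?_, fun z => ?_⟩
        · rw [map_mul, map_inv, y.2.1, hτu, mul_inv_cancel]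
        · exact U.mul_mem y.2.2 (U.inv_mem hu)
        · rw [map_mul, z.2.1, hτu, one_mul]
        · exact U.mul_mem z.2.2 hu
        · ext; simp
        · ext; simp
      rw [Finset.prod_congr rfl fun i _ => hfib i, Finset.prod_const]
      simp
    · rw [if_neg hmap]
      have : ∃ i, k i ∉ U.map τ := by
        by_contra hcon
        push_neg at hcon
        refine hmap (top_le_iff.1 ?_)
        rw [← hk]
        exact (Subgroup.closure_le _).2 (range_subset_iff.2 hcon)
      obtain ⟨i, hi⟩ := this
      refine Finset.prod_eq_zero (Finset.mem_univ i) ?_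
      rw [Nat.card_eq_zero]
      left
      constructor
      rintro ⟨y, hy1, hy2⟩
      exact hi ⟨y, hy2, hy1⟩
  rw [key h hgen, key h' hgen']

private lemma cnt_invariant (τ : L →* H) {h h' : Fin e → H}
    (hgen : Subgroup.closure (Set.range h) = ⊤)
    (hgen' : Subgroup.closure (Set.range h') = ⊤) (U : Subgroup L) :
    cnt τ h U = cnt τ h' U := by
  classical
  haveI : Finite (Subgroup L) :=
    Finite.of_injective (fun U : Subgroup L => (U : Set L)) SetLike.coe_injective
  letI : Fintype (Subgroup L) := Fintype.ofFinite _
  have main : ∀ n : ℕ, ∀ U : Subgroup L, Nat.card U ≤ n → cnt τ h U = cnt τ h' U := by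
    intro n
    induction n using Nat.strong_induction_on with
    | _ n ih =>
      intro U hU
      have hsum := (sumA τ h U).symm.trans
        ((A_invariant τ hgen hgen' U).trans (sumA τ h' U))
      rw [finsum_eq_sum_of_fintype, finsum_eq_sum_of_fintype] at hsum
      rw [← Finset.add_sum_erase _ _ (Finset.mem_univ U),
        ← Finset.add_sum_erase _ _ (Finset.mem_univ U)] at hsum
      simp only [if_pos le_rfl] at hsum
      have hrest : ∑ V ∈ Finset.univ.erase U, (if V ≤ U then cnt τ h V else 0)
          = ∑ V ∈ Finset.univ.erase U, (if V ≤ U then cnt τ h' V else 0) := by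
        refine Finset.sum_congr rfl fun V hV => ?_
        by_cases hVU : V ≤ U
        · rw [if_pos hVU, if_pos hVU]
          have hVne : V ≠ U := Finset.ne_of_mem_erase hV
          have hlt : Nat.card V < Nat.card U := by
            have hss : (V : Set L) ⊂ (U : Set L) :=
              SetLike.coe_ssubset_coe.2 (lt_of_le_of_ne hVU hVne)
            simpa [← Nat.card_coe_set_eq] using Set.ncard_lt_ncard hss (Set.toFinite _)
          exact ih (Nat.card V) (lt_of_lt_of_le hlt hU) V le_rfl
        · rw [if_neg hVU, if_neg hVU]
      omega
  exact main (Nat.card U) U le_rfl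

lemma gaschutz (τ : L →* H) (hτ : Surjective τ) (h : Fin e → H)
    (hgen : Subgroup.closure (Set.range h) = ⊤) (x' : Fin e → L)
    (hx' : Subgroup.closure (Set.range x') = ⊤) :
    ∃ x : Fin e → L, τ ∘ x = h ∧ Subgroup.closure (Set.range x) = ⊤ := by
  have hgen' : Subgroup.closure (Set.range (τ ∘ x')) = ⊤ := by
    rw [Set.range_comp, ← MonoidHom.map_closure, hx', ← MonoidHom.range_eq_map,
      MonoidHom.range_eq_top]
    exact hτ
  have hpos : 0 < cnt τ (τ ∘ x') ⊤ := by
    rw [cnt]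
    have : Nonempty {x : Fin e → L // τ ∘ x = τ ∘ x' ∧ Subgroup.closure (Set.range x) = ⊤} :=
      ⟨⟨x', rfl, hx'⟩⟩
    exact Nat.card_pos
  rw [cnt_invariant τ hgen' hgen ⊤] at hpos
  rw [cnt, Nat.card_pos_iff] at hpos
  obtain ⟨⟨x, hx1, hx2⟩⟩ := hpos.1
  exact ⟨x, hx1, hx2⟩

end Gaschutz


/-- An `e`-generated finite extension of `H` by an elementary abelian `p`-group:
a finite `e`-generated group together with a surjection onto `H` whose kernel is
abelian with every element of order dividing `p`. -/
structure PElemAbExtension (e p : ℕ) (H : Type) [Group H] where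
  carrier : Type
  [grp : Group carrier]
  [fin : Finite carrier]
  proj : carrier →* H
  gen : ∃ f : Fin e → carrier, Subgroup.closure (Set.range f) = ⊤
  surj : Function.Surjective proj
  ker_comm : ∀ a b : proj.ker, a * b = b * a
  ker_exp : ∀ g : proj.ker, g ^ p = 1

attribute [instance] PElemAbExtension.grp PElemAbExtension.fin

/-- **Existence of the `p`-cover of rank `e`.** For every finite `e`-generated group `H` and
prime `p` there is a finite `e`-generated extension `Ĥ → H` with elementary abelian `p`-group
kernel, through which every other such extension of `H` factors. -/
theorem stmt_1 (e p : ℕ) (he : 0 < e) (hp : p.Prime) (H : Type) [Group H] [Finite H]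
    (hH : ∃ f : Fin e → H, Subgroup.closure (Set.range f) = ⊤) :
    ∃ C : PElemAbExtension e p H,
      ∀ (L : Type) [Group L] [Finite L] (τ : L →* H),
        (∃ f : Fin e → L, Subgroup.closure (Set.range f) = ⊤) →
        Function.Surjective τ →
        (∀ a b : τ.ker, a * b = b * a) →
        (∀ g : τ.ker, g ^ p = 1) →
        ∃ σ : C.carrier →* L, Function.Surjective σ ∧ τ.comp σ = C.proj := by
  classical
  obtain ⟨h, hgen⟩ := hH
  set F := FreeGroup (Fin e) with hF
  set φ : F →* H := FreeGroup.lift h with hφ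
  have hφsurj : Surjective φ := by
    rw [← MonoidHom.range_eq_top, hφ, FreeGroup.range_lift_eq_closure, hgen]
  set N := φ.ker with hN
  set genK : Set F :=
    {g | ∃ n ∈ N, g = n ^ p} ∪ {g | ∃ a ∈ N, ∃ b ∈ N, g = a * b * a⁻¹ * b⁻¹} with hgenK
  set K := Subgroup.normalClosure genK with hK
  have hgenK_sub : genK ⊆ (N : Set F) := by
    rintro g (⟨n, hn, rfl⟩ | ⟨a, ha, b, hb, rfl⟩)
    · exact N.pow_mem hn p
    · exact N.mul_mem (N.mul_mem (N.mul_mem ha hb) (N.inv_mem ha)) (N.inv_mem hb)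
  have hKN : K ≤ N := Subgroup.normalClosure_le_normal hgenK_sub
  -- the projection
  have hKker : ∀ g ∈ K, φ g = 1 := fun g hg => hKN hg
  set π : F ⧸ K →* H := QuotientGroup.lift K φ hKker with hπ
  have hπmk : ∀ g : F, π (QuotientGroup.mk g) = φ g := fun g => rfl
  have hπsurj : Surjective π := by
    intro y
    obtain ⟨g, rfl⟩ := hφsurj y
    exact ⟨QuotientGroup.mk g, rfl⟩
  -- generation of the quotient
  have hCgen : ∃ f : Fin e → F ⧸ K, Subgroup.closure (Set.range f) = ⊤ := by
    refine ⟨fun i => QuotientGroup.mk (FreeGroup.of i), ?_⟩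
    have : (fun i => (QuotientGroup.mk (FreeGroup.of i) : F ⧸ K))
        = (QuotientGroup.mk' K) ∘ FreeGroup.of := rfl
    rw [this, Set.range_comp, ← MonoidHom.map_closure, FreeGroup.closure_range_of,
      ← MonoidHom.range_eq_map, MonoidHom.range_eq_top]
    exact QuotientGroup.mk'_surjective K
  -- kernel properties
  have hker_mem : ∀ a : π.ker, ∃ n : F, n ∈ N ∧ QuotientGroup.mk n = (a : F ⧸ K) := by
    rintro ⟨a, ha⟩
    obtain ⟨n, rfl⟩ := QuotientGroup.mk_surjective a
    exact ⟨n, by rwa [MonoidHom.mem_ker, hπmk] at ha, rfl⟩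
  have hker_comm : ∀ a b : π.ker, a * b = b * a := by
    intro a b
    obtain ⟨n, hn, hna⟩ := hker_mem a
    obtain ⟨m, hm, hmb⟩ := hker_mem b
    have : QuotientGroup.mk (n * m) = (QuotientGroup.mk (m * n) : F ⧸ K) := by
      rw [QuotientGroup.eq]
      have hx : (n * m)⁻¹ * (m * n) = m⁻¹ * n⁻¹ * (m⁻¹)⁻¹ * (n⁻¹)⁻¹ := by
        simp [mul_assoc]
        exact (congrArg₂ (· * ·) (inv_inv m) (inv_inv n)).symm
      rw [hx]
      exact Subgroup.subset_normalClosure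
        (Or.inr ⟨m⁻¹, N.inv_mem hm, n⁻¹, N.inv_mem hn, rfl⟩)
    apply Subtype.ext
    show (a : F ⧸ K) * b = (b : F ⧸ K) * a
    rw [← hna, ← hmb, QuotientGroup.mk_mul, QuotientGroup.mk_mul] at *
    exact this
  have hker_exp : ∀ g : π.ker, g ^ p = 1 := by
    intro g
    obtain ⟨n, hn, hng⟩ := hker_mem g
    apply Subtype.ext
    show ((g : F ⧸ K)) ^ p = 1
    rw [← hng, ← QuotientGroup.mk_pow, QuotientGroup.eq_one_iff]
    exact Subgroup.subset_normalClosure (Or.inl ⟨n, hn, rfl⟩)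
  -- finiteness
  haveI : Group.FG F := by
    rw [Group.fg_iff]
    exact ⟨Set.range FreeGroup.of, FreeGroup.closure_range_of _, Set.finite_range _⟩
  haveI : Finite (F ⧸ N) :=
    Finite.of_equiv H (QuotientGroup.quotientKerEquivOfSurjective φ hφsurj).symm.toEquiv
  haveI : N.FiniteIndex := N.finiteIndex_of_finite_quotient
  haveI : Group.FG ↥N := Subgroup.fg_of_index_ne_zero N
  set KN := K.subgroupOf N with hKNdef
  haveI : KN.Normal := Subgroup.normal_subgroupOf
  set Q := N ⧸ KN with hQ
  have hQcomm : ∀ a b : Q, a * b = b * a := by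
    intro a b
    obtain ⟨n, rfl⟩ := QuotientGroup.mk_surjective a
    obtain ⟨m, rfl⟩ := QuotientGroup.mk_surjective b
    rw [← QuotientGroup.mk_mul, ← QuotientGroup.mk_mul, QuotientGroup.eq]
    rw [Subgroup.mem_subgroupOf]
    have hx : ((((n * m)⁻¹ * (m * n) : N) : F))
        = (m : F)⁻¹ * (n : F)⁻¹ * ((m : F)⁻¹)⁻¹ * ((n : F)⁻¹)⁻¹ := by
      push_cast
      simp [mul_assoc]
      exact (congrArg₂ (· * ·) (inv_inv (m : F)) (inv_inv (n : F))).symm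
    rw [hx]
    exact Subgroup.subset_normalClosure
      (Or.inr ⟨(m : F)⁻¹, N.inv_mem m.2, (n : F)⁻¹, N.inv_mem n.2, rfl⟩)
  letI : CommGroup Q := { (inferInstance : Group Q) with mul_comm := hQcomm }
  have hQexp : ∀ q : Q, q ^ p = 1 := by
    intro q
    obtain ⟨n, rfl⟩ := QuotientGroup.mk_surjective q
    rw [← QuotientGroup.mk_pow, QuotientGroup.eq_one_iff]
    rw [Subgroup.mem_subgroupOf]
    have hx : (((n ^ p : N) : F)) = (n : F) ^ p := by push_cast; ring_nf
    rw [hx]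
    exact Subgroup.subset_normalClosure (Or.inl ⟨(n : F), n.2, rfl⟩)
  haveI : Group.FG Q := Group.fg_of_surjective (QuotientGroup.mk'_surjective KN)
  obtain ⟨S, hSclosure, hSfin⟩ := Group.fg_iff.mp (inferInstance : Group.FG Q)
  haveI : Finite Q := elemab_finite hp.one_lt hQexp hSfin.toFinset
    (by rwa [Set.Finite.coe_toFinset])
  haveI : KN.FiniteIndex := KN.finiteIndex_of_finite_quotient
  have hKidx : K.index ≠ 0 := by
    have hrel := Subgroup.relIndex_mul_index hKN
    rw [← hrel]
    exact Nat.mul_ne_zero (@Subgroup.FiniteIndex.index_ne_zero _ _ KN inferInstance) (@Subgroup.FiniteIndex.index_ne_zero _ _ N inferInstance)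
  haveI : K.FiniteIndex := ⟨hKidx⟩
  haveI hfinC : Finite (F ⧸ K) := Subgroup.finite_quotient_of_finiteIndex
  -- assemble the cover
  refine ⟨⟨F ⧸ K, π, hCgen, hπsurj, hker_comm, hker_exp⟩, ?_⟩
  intro L _ _ τ hLgen hτsurj hτcomm hτexp
  obtain ⟨y, hy⟩ := hLgen
  obtain ⟨x, hτx, hxgen⟩ := gaschutz τ hτsurj h hgen y hy
  set ψ : F →* L := FreeGroup.lift x with hψ
  have hcomp : τ.comp ψ = φ := by
    apply FreeGroup.ext_hom
    intro a
    show τ (ψ (FreeGroup.of a)) = φ (FreeGroup.of a)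
    rw [hψ, hφ, FreeGroup.lift_apply_of, FreeGroup.lift_apply_of]
    exact congr_fun hτx a
  have hcompg : ∀ g, τ (ψ g) = φ g := fun g => DFunLike.congr_fun hcomp g
  have hψsurj : Surjective ψ := by
    rw [← MonoidHom.range_eq_top, hψ, FreeGroup.range_lift_eq_closure, hxgen]
  have hgenKψ : genK ⊆ (ψ.ker : Set F) := by
    rintro g (⟨n, hn, rfl⟩ | ⟨a, ha, b, hb, rfl⟩)
    · have hmem : ψ n ∈ τ.ker := by
        rw [MonoidHom.mem_ker, hcompg]
        exact hn
      have h1 := hτexp ⟨ψ n, hmem⟩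
      have h2 : (ψ n) ^ p = 1 := by
        have := congrArg (Subtype.val) h1
        simpa using this
      rw [SetLike.mem_coe, MonoidHom.mem_ker, map_pow, h2]
    · have hmema : ψ a ∈ τ.ker := by
        rw [MonoidHom.mem_ker, hcompg]; exact ha
      have hmemb : ψ b ∈ τ.ker := by
        rw [MonoidHom.mem_ker, hcompg]; exact hb
      have h1 := hτcomm ⟨ψ a, hmema⟩ ⟨ψ b, hmemb⟩
      have h2 : ψ a * ψ b = ψ b * ψ a := by
        have := congrArg (Subtype.val) h1
        simpa using this
      rw [SetLike.mem_coe, MonoidHom.mem_ker, map_mul, map_mul, map_mul, map_inv, map_inv,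
        h2, mul_inv_cancel_right, mul_inv_cancel]
  have hKψ : K ≤ ψ.ker := Subgroup.normalClosure_le_normal hgenKψ
  refine ⟨QuotientGroup.lift K ψ (fun g hg => hKψ hg), ?_, ?_⟩
  · intro l
    obtain ⟨g, rfl⟩ := hψsurj l
    exact ⟨QuotientGroup.mk g, rfl⟩
  · apply QuotientGroup.monoidHom_ext
    apply MonoidHom.ext
    intro g
    show τ (ψ g) = π (QuotientGroup.mk g)
    rw [hcompg, hπmk]
end

section
/- Let F be the free group on e generators x_1, …, x_e, let H be a finite group, and let ψ: F → H be a surjective homomorphism with kernel M. Then for every finite group L generated by e elements and every surjective homomorphism τ: L → H whose kernel is an elementary abelian p-group, there exists a surjective homomorphism β: F → L with τ ∘ β = ψ and M_p ≤ ker β; in particular, L is isomorphic to a quotient of F/M_p. -/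
open Subgroup

section Gaschuetz

set_option linter.unusedSectionVars false

variable {e : ℕ} {L H : Type} [Group L] [Group H] [Finite L]

noncomputable def gcount (τ : L →* H) (U : Subgroup L) (h : Fin e → H) : ℕ :=
  Nat.card {u : Fin e → L // (∀ i, τ (u i) = h i) ∧ Subgroup.closure (Set.range u) = U}

noncomputable def lcount (τ : L →* H) (U : Subgroup L) (h : Fin e → H) : ℕ :=
  Nat.card {u : Fin e → L // (∀ i, u i ∈ U) ∧ ∀ i, τ (u i) = h i}

lemma gcount_eq_zero (τ : L →* H) {U : Subgroup L} {h : Fin e → H}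
    (hh : Subgroup.closure (Set.range h) = ⊤) (hU : U.map τ ≠ ⊤) : gcount τ U h = 0 := by
  have : IsEmpty {u : Fin e → L // (∀ i, τ (u i) = h i) ∧ Subgroup.closure (Set.range u) = U} := by
    constructor
    rintro ⟨u, hu1, hu2⟩
    apply hU
    have : τ ∘ u = h := funext hu1
    rw [← hu2, MonoidHom.map_closure, ← Set.range_comp, this, hh]
  exact Nat.card_of_isEmpty

lemma lcount_eq (τ : L →* H) {U : Subgroup L} (hU : U.map τ = ⊤) (h h' : Fin e → H) :
    lcount τ U h = lcount τ U h' := by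
  have hex : ∀ y : H, ∃ x : L, x ∈ U ∧ τ x = y := by
    intro y
    have : y ∈ U.map τ := hU ▸ mem_top y
    obtain ⟨x, hx, hxy⟩ := this
    exact ⟨x, hx, hxy⟩
  choose a ha hta using fun i => hex (h i)
  choose b hb htb using fun i => hex (h' i)
  apply Nat.card_congr
  refine ⟨fun ⟨u, hu1, hu2⟩ => ⟨fun i => u i * (a i)⁻¹ * b i, ?_, ?_⟩,
          fun ⟨u, hu1, hu2⟩ => ⟨fun i => u i * (b i)⁻¹ * a i, ?_, ?_⟩, ?_, ?_⟩
  · exact fun i => U.mul_mem (U.mul_mem (hu1 i) (U.inv_mem (ha i))) (hb i)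
  · intro i; simp [map_mul, map_inv, hu2 i, hta i, htb i]
  · exact fun i => U.mul_mem (U.mul_mem (hu1 i) (U.inv_mem (hb i))) (ha i)
  · intro i; simp [map_mul, map_inv, hu2 i, hta i, htb i]
  · rintro ⟨u, hu1, hu2⟩; ext i; simp [mul_assoc]
  · rintro ⟨u, hu1, hu2⟩; ext i; simp [mul_assoc]

lemma lcount_eq_sum (τ : L →* H) (U : Subgroup L) (h : Fin e → H)
    [Fintype {V : Subgroup L // V ≤ U}] :
    lcount τ U h = ∑ V : {V : Subgroup L // V ≤ U}, gcount τ V.1 h := by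
  classical
  have equiv : {u : Fin e → L // (∀ i, u i ∈ U) ∧ ∀ i, τ (u i) = h i} ≃
      Σ V : {V : Subgroup L // V ≤ U},
        {u : Fin e → L // (∀ i, τ (u i) = h i) ∧ Subgroup.closure (Set.range u) = V.1} := by
    refine ⟨fun ⟨u, hu1, hu2⟩ => ⟨⟨Subgroup.closure (Set.range u), ?_⟩, ⟨u, hu2, rfl⟩⟩,
            fun ⟨V, ⟨u, hu1, hu2⟩⟩ => ⟨u, ?_, hu1⟩, ?_, ?_⟩
    · rw [Subgroup.closure_le]
      rintro x ⟨i, rfl⟩; exact hu1 i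
    · intro i
      exact V.2 (hu2 ▸ Subgroup.subset_closure ⟨i, rfl⟩)
    · rintro ⟨u, hu1, hu2⟩; rfl
    · rintro ⟨⟨V, hVle⟩, ⟨u, hu1, hu2⟩⟩
      simp only at hu2
      subst hu2
      rfl
  haveI : ∀ V : {V : Subgroup L // V ≤ U}, Fintype
      {u : Fin e → L // (∀ i, τ (u i) = h i) ∧ Subgroup.closure (Set.range u) = V.1} :=
    fun V => Fintype.ofFinite _
  rw [lcount, Nat.card_congr equiv, Nat.card_eq_fintype_card, Fintype.card_sigma]
  exact Finset.sum_congr rfl fun V _ => (Nat.card_eq_fintype_card).symm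

lemma gcount_key (τ : L →* H) :
    ∀ U : Subgroup L, U.map τ = ⊤ → ∀ h h' : Fin e → H,
      Subgroup.closure (Set.range h) = ⊤ → Subgroup.closure (Set.range h') = ⊤ →
      gcount τ U h = gcount τ U h' := by
  classical
  haveI : Finite (Subgroup L) :=
    Finite.of_injective (fun W => (W : Set L)) fun _ _ hw => SetLike.coe_injective hw
  intro U
  induction U using WellFoundedLT.induction with
  | ind U IH =>
    intro hU h h' hh hh'
    haveI : Fintype {V : Subgroup L // V ≤ U} := Fintype.ofFinite _
    have hsum := (lcount_eq_sum τ U h).symm.trans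
      ((lcount_eq τ hU h h').trans (lcount_eq_sum τ U h'))
    have hmem : (⟨U, le_refl U⟩ : {V : Subgroup L // V ≤ U}) ∈ Finset.univ := Finset.mem_univ _
    rw [← Finset.add_sum_erase _ _ hmem, ← Finset.add_sum_erase _ _ hmem] at hsum
    have hrest : ∀ V ∈ Finset.univ.erase (⟨U, le_refl U⟩ : {V : Subgroup L // V ≤ U}),
        gcount τ V.1 h = gcount τ V.1 h' := by
      intro V hV
      have hVne : V.1 ≠ U := fun hc => (Finset.mem_erase.mp hV).1 (Subtype.ext hc)
      by_cases hVmap : V.1.map τ = ⊤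
      · exact IH V.1 (lt_of_le_of_ne V.2 hVne) hVmap h h' hh hh'
      · rw [gcount_eq_zero τ hh hVmap, gcount_eq_zero τ hh' hVmap]
    rw [Finset.sum_congr rfl hrest] at hsum
    exact Nat.add_right_cancel hsum

end Gaschuetz

open scoped commutatorElement

/-- For a subgroup `N` of `F`, `subgroupP p N = [N,N]·N^{[p]}` is the subgroup generated by all
commutators `⁅a,b⁆` with `a b ∈ N` and all `p`-th powers `a ^ p` with `a ∈ N`. -/
def subgroupP (p : ℕ) {F : Type*} [Group F] (N : Subgroup F) : Subgroup F :=
  Subgroup.closure ({x | ∃ a ∈ N, ∃ b ∈ N, x = ⁅a, b⁆} ∪ {x | ∃ a ∈ N, x = a ^ p})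

/-- If `N` is normal in `F`, then so is `subgroupP p N`. -/
instance subgroupP_normal (p : ℕ) {F : Type*} [Group F] (N : Subgroup F) [hN : N.Normal] :
    (subgroupP p N).Normal := by
  constructor
  intro n hn g
  have h1 : (subgroupP p N).map (MulAut.conj g).toMonoidHom ≤ subgroupP p N := by
    rw [subgroupP, MonoidHom.map_closure]
    apply Subgroup.closure_mono
    rintro x ⟨y, hy, rfl⟩
    rcases hy with ⟨a, ha, b, hb, rfl⟩ | ⟨a, ha, rfl⟩
    · exact Or.inl ⟨g * a * g⁻¹, hN.conj_mem a ha g, g * b * g⁻¹, hN.conj_mem b hb g,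
        by simp [map_commutatorElement]⟩
    · exact Or.inr ⟨g * a * g⁻¹, hN.conj_mem a ha g, by simp [map_pow]⟩
  exact h1 ⟨n, hn, rfl⟩

/-- Every finite `e`-generated extension `L` of `H` with elementary abelian `p`-kernel is a
quotient of `F ⧸ M_p` where `M = ker ψ` for a surjection `ψ` from the free group `F` of rank
`e`: the lift `β : F → L` can be chosen with `τ ∘ β = ψ` and `M_p ≤ ker β`. -/
theorem stmt_2 (e p : ℕ) (he : 0 < e) (hp : p.Prime) (H : Type) [Group H] [Finite H]
    (ψ : FreeGroup (Fin e) →* H) (hψ : Function.Surjective ψ)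
    (L : Type) [Group L] [Finite L]
    (hL : ∃ f : Fin e → L, Subgroup.closure (Set.range f) = ⊤)
    (τ : L →* H) (hτ : Function.Surjective τ)
    (hab : ∀ a b : τ.ker, a * b = b * a) (hexp : ∀ g : τ.ker, g ^ p = 1) :
    (∃ β : FreeGroup (Fin e) →* L,
      Function.Surjective β ∧ τ.comp β = ψ ∧ subgroupP p ψ.ker ≤ β.ker) ∧
    ∃ φ : (FreeGroup (Fin e) ⧸ subgroupP p ψ.ker) →* L, Function.Surjective φ := by
  classical
  set h : Fin e → H := fun i => ψ (FreeGroup.of i) with hh_def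
  obtain ⟨f, hf⟩ := hL
  set h' : Fin e → H := fun i => τ (f i) with hh'_def
  have hh : Subgroup.closure (Set.range h) = ⊤ := by
    have h1 : (⊤ : Subgroup (FreeGroup (Fin e))).map ψ = ⊤ :=
      Subgroup.map_top_of_surjective ψ hψ
    rw [← FreeGroup.closure_range_of, MonoidHom.map_closure, ← Set.range_comp] at h1
    exact h1
  have hh' : Subgroup.closure (Set.range h') = ⊤ := by
    have h1 : (⊤ : Subgroup L).map τ = ⊤ := Subgroup.map_top_of_surjective τ hτ
    rw [← hf, MonoidHom.map_closure, ← Set.range_comp] at h1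
    exact h1
  -- Gaschütz counting: there is a generating tuple of `L` lifting `h`
  have hpos : 0 < gcount τ ⊤ h' := by
    rw [gcount]
    have : Nonempty {u : Fin e → L // (∀ i, τ (u i) = h' i) ∧
        Subgroup.closure (Set.range u) = ⊤} := ⟨⟨f, fun i => rfl, hf⟩⟩
    exact Nat.card_pos
  have hkey := gcount_key τ ⊤ (Subgroup.map_top_of_surjective τ hτ) h h' hh hh'
  rw [gcount] at hkey
  have : Nonempty {u : Fin e → L // (∀ i, τ (u i) = h i) ∧
      Subgroup.closure (Set.range u) = ⊤} :=
    (Nat.card_pos_iff.mp (hkey ▸ hpos)).1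
  obtain ⟨u, hu1, hu2⟩ := this
  set β : FreeGroup (Fin e) →* L := FreeGroup.lift u with hβ_def
  have hcomp : τ.comp β = ψ := by
    apply FreeGroup.ext_hom
    intro i
    simp only [MonoidHom.comp_apply, hβ_def, FreeGroup.lift_apply_of]
    exact hu1 i
  have hsurj : Function.Surjective β := by
    have hr : (⊤ : Subgroup L) ≤ β.range := by
      rw [← hu2, Subgroup.closure_le]
      rintro x ⟨i, rfl⟩
      exact ⟨FreeGroup.of i, FreeGroup.lift_apply_of⟩
    rw [← MonoidHom.range_eq_top]
    exact top_le_iff.mp hr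
  have hmemker : ∀ a ∈ ψ.ker, β a ∈ τ.ker := by
    intro a ha
    have : τ (β a) = ψ a := congrFun (congrArg DFunLike.coe hcomp) a
    rw [MonoidHom.mem_ker, this]
    exact ha
  have hker : subgroupP p ψ.ker ≤ β.ker := by
    rw [subgroupP, Subgroup.closure_le]
    rintro x (⟨a, ha, b, hb, rfl⟩ | ⟨a, ha, rfl⟩)
    · have hc := hab ⟨β a, hmemker a ha⟩ ⟨β b, hmemker b hb⟩
      have hc' : β a * β b = β b * β a := congrArg Subtype.val hc
      show ⁅a, b⁆ ∈ β.ker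
      rw [MonoidHom.mem_ker, map_commutatorElement]
      exact commutatorElement_eq_one_iff_commute.mpr hc'
    · have hc := hexp ⟨β a, hmemker a ha⟩
      have hc' : (β a) ^ p = 1 := by
        have := congrArg Subtype.val hc
        simpa using this
      show a ^ p ∈ β.ker
      rw [MonoidHom.mem_ker, map_pow]
      exact hc'
  refine ⟨⟨β, hsurj, hcomp, hker⟩, ?_⟩
  refine ⟨QuotientGroup.lift (subgroupP p ψ.ker) β hker, ?_⟩
  intro l
  obtain ⟨x, hx⟩ := hsurj l
  exact ⟨QuotientGroup.mk x, hx⟩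
end

section
/- Let F be the free group on e generators and let H be a finite group. If ψ_1, ψ_2: F → H are surjective homomorphisms with kernels M^1 = ker ψ_1 and M^2 = ker ψ_2, then the quotient groups F/(M^1)_p and F/(M^2)_p are isomorphic. -/
open scoped commutatorElement

/-! ### Gaschütz's lemma -/

section Gaschutz

open Finset

variable {G : Type*} [Group G] [Fintype G] {H : Type*} [Group H] {e : ℕ}

open scoped Classical in
/-- Tuples in `U` lifting `h` through `f`. -/
private noncomputable def liftsF (f : G →* H) (h : Fin e → H) (U : Subgroup G) :
    Finset (Fin e → G) :=
  Finset.univ.filter fun g => (∀ i, f (g i) = h i) ∧ ∀ i, g i ∈ U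

open scoped Classical in
/-- Tuples lifting `h` through `f` that generate exactly `U`. -/
private noncomputable def exactsF (f : G →* H) (h : Fin e → H) (U : Subgroup G) :
    Finset (Fin e → G) :=
  Finset.univ.filter fun g => (∀ i, f (g i) = h i) ∧ Subgroup.closure (Set.range g) = U

private noncomputable local instance : Fintype (Subgroup G) :=
  Fintype.ofFinite _

open scoped Classical in
private lemma liftsF_card (f : G →* H) (h : Fin e → H) (U : Subgroup G) :
    (liftsF f h U).card = ∑ V ∈ Finset.univ.filter (· ≤ U), (exactsF f h V).card := by
  rw [Finset.card_eq_sum_card_fiberwise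
      (f := fun g : Fin e → G => Subgroup.closure (Set.range g))
      (t := Finset.univ.filter (· ≤ U))
      (fun g hg => by
        simp only [liftsF, mem_coe, mem_filter, mem_univ, true_and] at hg
        simp only [mem_coe, mem_filter, mem_univ, true_and]
        exact (Subgroup.closure_le U).2 (Set.range_subset_iff.2 hg.2))]
  refine Finset.sum_congr rfl fun V hV => ?_
  simp only [mem_filter, mem_univ, true_and] at hV
  congr 1
  ext g
  simp only [liftsF, exactsF, mem_filter, mem_univ, true_and]
  constructor
  · rintro ⟨⟨hf, _⟩, hcl⟩
    exact ⟨hf, hcl⟩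
  · rintro ⟨hf, hcl⟩
    refine ⟨⟨hf, fun i => hV ?_⟩, hcl⟩
    rw [← hcl]
    exact Subgroup.subset_closure (Set.mem_range_self i)

open scoped Classical in
private lemma liftsF_card_eq (f : G →* H) (h₁ h₂ : Fin e → H) (U : Subgroup G)
    (hU : U.map f = ⊤) : (liftsF f h₁ U).card = (liftsF f h₂ U).card := by
  have exu : ∀ (h : Fin e → H) (i : Fin e), ∃ u : G, u ∈ U ∧ f u = h i := by
    intro h i
    have hmem : h i ∈ U.map f := hU ▸ Subgroup.mem_top _
    obtain ⟨u, hu, hfu⟩ := hmem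
    exact ⟨u, hu, hfu⟩
  choose u hu hfu using exu
  apply Finset.card_nbij' (fun g => fun i => u h₂ i * (u h₁ i)⁻¹ * g i)
      (fun g => fun i => u h₁ i * (u h₂ i)⁻¹ * g i)
  · intro g hg
    simp only [liftsF, mem_coe, mem_filter, mem_univ, true_and] at hg ⊢
    refine ⟨fun i => ?_, fun i => U.mul_mem (U.mul_mem (hu h₂ i) (U.inv_mem (hu h₁ i))) (hg.2 i)⟩
    simp [map_mul, map_inv, hfu h₂ i, hfu h₁ i, hg.1 i, mul_assoc]
  · intro g hg
    simp only [liftsF, mem_coe, mem_filter, mem_univ, true_and] at hg ⊢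
    refine ⟨fun i => ?_, fun i => U.mul_mem (U.mul_mem (hu h₁ i) (U.inv_mem (hu h₂ i))) (hg.2 i)⟩
    simp [map_mul, map_inv, hfu h₂ i, hfu h₁ i, hg.1 i, mul_assoc]
  · intro g _
    funext i
    group
  · intro g _
    funext i
    group

private lemma exactsF_empty (f : G →* H) (h : Fin e → H)
    (hh : Subgroup.closure (Set.range h) = ⊤) (U : Subgroup G) (hU : U.map f ≠ ⊤) :
    exactsF f h U = ∅ := by
  classical
  ext g
  simp only [exactsF, mem_filter, mem_univ, true_and, Finset.notMem_empty, iff_false, not_and]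
  intro hf hcl
  apply hU
  rw [← hcl, MonoidHom.map_closure, ← Set.range_comp]
  have hfg : (f ∘ g) = h := funext hf
  rw [hfg, hh]

open scoped Classical in
private lemma exactsF_card_eq (f : G →* H) (h₁ h₂ : Fin e → H)
    (hh₁ : Subgroup.closure (Set.range h₁) = ⊤) (hh₂ : Subgroup.closure (Set.range h₂) = ⊤)
    (U : Subgroup G) : (exactsF f h₁ U).card = (exactsF f h₂ U).card := by
  induction U using WellFoundedLT.induction with
  | _ U IH =>
    have hsplit : ∀ h : Fin e → H, (liftsF f h U).card
        = (exactsF f h U).card + ∑ V ∈ Finset.univ.filter (· < U), (exactsF f h V).card := by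
      intro h
      rw [liftsF_card]
      have hins : Finset.univ.filter (· ≤ U) = insert U (Finset.univ.filter (· < U)) := by
        ext V
        simp [le_iff_lt_or_eq, or_comm]
      rw [hins, Finset.sum_insert (by simp)]
    by_cases hU : U.map f = ⊤
    · have hl := liftsF_card_eq f h₁ h₂ U hU
      rw [hsplit h₁, hsplit h₂] at hl
      have hsum : ∑ V ∈ Finset.univ.filter (· < U), (exactsF f h₁ V).card
          = ∑ V ∈ Finset.univ.filter (· < U), (exactsF f h₂ V).card :=
        Finset.sum_congr rfl fun V hV => IH V (by simpa using hV)
      omega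
    · rw [exactsF_empty f h₁ hh₁ U hU, exactsF_empty f h₂ hh₂ U hU]

private lemma gaschutz_s3 (f : G →* H) (x : Fin e → G)
    (hx : Subgroup.closure (Set.range x) = ⊤) (hf : Function.Surjective f)
    (h : Fin e → H) (hh : Subgroup.closure (Set.range h) = ⊤) :
    ∃ g : Fin e → G, (∀ i, f (g i) = h i) ∧ Subgroup.closure (Set.range g) = ⊤ := by
  classical
  have hfx : Subgroup.closure (Set.range (f ∘ x)) = ⊤ := by
    rw [Set.range_comp, ← MonoidHom.map_closure, hx, ← MonoidHom.range_eq_map,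
      MonoidHom.range_eq_top.2 hf]
  have hcard := exactsF_card_eq f (f ∘ x) h hfx hh ⊤
  have hmem : x ∈ exactsF f (f ∘ x) ⊤ := by
    simp only [exactsF, Finset.mem_filter, Finset.mem_univ, true_and]
    exact ⟨fun i => rfl, hx⟩
  have hpos : 0 < (exactsF f h ⊤).card := by
    rw [← hcard]
    exact Finset.card_pos.2 ⟨x, hmem⟩
  obtain ⟨g, hg⟩ := Finset.card_pos.1 hpos
  simp only [exactsF, Finset.mem_filter, Finset.mem_univ, true_and] at hg
  exact ⟨g, hg.1, hg.2⟩

end Gaschutz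

/-! ### Basic facts about `subgroupP` -/

section SubgroupPFacts

variable {F : Type*} [Group F]

lemma subgroupP_le (p : ℕ) (N : Subgroup F) : subgroupP p N ≤ N := by
  rw [subgroupP, Subgroup.closure_le]
  rintro x (⟨a, ha, b, hb, rfl⟩ | ⟨a, ha, rfl⟩)
  · show ⁅a, b⁆ ∈ N
    rw [commutatorElement_def]
    exact N.mul_mem (N.mul_mem (N.mul_mem ha hb) (N.inv_mem ha)) (N.inv_mem hb)
  · exact N.pow_mem ha p

lemma commutator_mem_subgroupP {p : ℕ} {N : Subgroup F} {a b : F} (ha : a ∈ N) (hb : b ∈ N) :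
    ⁅a, b⁆ ∈ subgroupP p N :=
  Subgroup.subset_closure (Or.inl ⟨a, ha, b, hb, rfl⟩)

lemma pow_mem_subgroupP {p : ℕ} {N : Subgroup F} {a : F} (ha : a ∈ N) :
    a ^ p ∈ subgroupP p N :=
  Subgroup.subset_closure (Or.inr ⟨a, ha, rfl⟩)

end SubgroupPFacts

/-! ### Finiteness of `F ⧸ (ker ψ)_p` -/

section Finiteness

variable {H : Type*} [Group H] [Finite H]

lemma finite_quot (p : ℕ) (hp : p.Prime) {e : ℕ} (ψ : FreeGroup (Fin e) →* H) :
    Finite (FreeGroup (Fin e) ⧸ subgroupP p ψ.ker) := by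
  classical
  set Fr := FreeGroup (Fin e) with hFr
  set M : Subgroup Fr := ψ.ker with hM
  set K : Subgroup Fr := subgroupP p M with hK
  haveI : Group.FG Fr :=
    Group.fg_iff.2 ⟨Set.range FreeGroup.of, FreeGroup.closure_range_of _, Set.finite_range _⟩
  haveI : M.FiniteIndex := Subgroup.finiteIndex_ker ψ
  haveI : Group.FG M := Subgroup.fg_of_index_ne_zero M
  set H' : Subgroup M := K.subgroupOf M with hH'
  haveI : H'.Normal := Subgroup.normal_subgroupOf
  haveI hQfg : Group.FG (M ⧸ H') := Group.fg_of_surjective (QuotientGroup.mk'_surjective H')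
  -- M ⧸ H' is commutative
  have hcomm : ∀ a b : M ⧸ H', a * b = b * a := by
    intro a b
    induction a using QuotientGroup.induction_on with
    | _ a =>
    induction b using QuotientGroup.induction_on with
    | _ b =>
    rw [← QuotientGroup.mk_mul, ← QuotientGroup.mk_mul, QuotientGroup.eq,
      Subgroup.mem_subgroupOf]
    have heq : ((a * b)⁻¹ * (b * a) : M) = ⁅b⁻¹, a⁻¹⁆ := by group
    have hco : (((⁅b⁻¹, a⁻¹⁆ : M)) : Fr) = ⁅((b : Fr))⁻¹, ((a : Fr))⁻¹⁆ := by
      exact map_commutatorElement M.subtype _ _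
    rw [heq, hco]
    exact commutator_mem_subgroupP (M.inv_mem b.2) (M.inv_mem a.2)
  -- every element of M ⧸ H' has order dividing p
  have hpow : ∀ a : M ⧸ H', a ^ p = 1 := by
    intro a
    induction a using QuotientGroup.induction_on with
    | _ a =>
    rw [← QuotientGroup.mk_pow, QuotientGroup.eq_one_iff, Subgroup.mem_subgroupOf]
    have hco : (((a ^ p : M)) : Fr) = (a : Fr) ^ p := by
      simp
    rw [hco]
    exact pow_mem_subgroupP a.2
  -- hence M ⧸ H' is finite
  letI : CommGroup (M ⧸ H') := { (inferInstance : Group (M ⧸ H')) with mul_comm := hcomm }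
  haveI : NeZero p := ⟨hp.ne_zero⟩
  have hsmul : ∀ x : Additive (M ⧸ H'), p • x = 0 := by
    intro x
    have h1 : x.toMul ^ p = 1 := hpow x.toMul
    have h2 : Additive.ofMul (x.toMul ^ p) = Additive.ofMul (1 : M ⧸ H') := congrArg _ h1
    rwa [ofMul_pow, ofMul_one] at h2
  haveI : Module (ZMod p) (Additive (M ⧸ H')) := AddCommGroup.zmodModule hsmul
  have hMF : Module.Finite (ZMod p) (Additive (M ⧸ H')) := by
    obtain ⟨S, hS1, hS2⟩ := Group.fg_iff.1 hQfg
    set sp : Submodule (ZMod p) (Additive (M ⧸ H')) :=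
      Submodule.span (ZMod p) (Additive.ofMul '' S) with hsp
    refine ⟨?_⟩
    rw [Submodule.fg_def]
    refine ⟨Additive.ofMul '' S, hS2.image _, ?_⟩
    rw [← hsp, Submodule.eq_top_iff']
    intro x
    have hx : x.toMul ∈ Subgroup.closure S := hS1 ▸ Subgroup.mem_top _
    exact Subgroup.closure_induction
      (p := fun y _ => Additive.ofMul y ∈ sp)
      (fun y hy => Submodule.subset_span (Set.mem_image_of_mem _ hy))
      (sp.zero_mem)
      (fun a b _ _ pa pb => sp.add_mem pa pb)
      (fun a _ pa => sp.neg_mem pa)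
      hx
  haveI : Finite (Additive (M ⧸ H')) := Module.finite_of_finite (ZMod p)
  haveI hQfin : Finite (M ⧸ H') := Finite.of_equiv (Additive (M ⧸ H')) Additive.toMul
  -- transfer finiteness to Fr ⧸ K
  set ρ : M →* Fr ⧸ K := (QuotientGroup.mk' K).comp M.subtype with hρ
  have hkerρ : ρ.ker = H' := by
    ext x
    simp only [hρ, MonoidHom.mem_ker, MonoidHom.comp_apply, Subgroup.coe_subtype,
      QuotientGroup.mk'_apply, QuotientGroup.eq_one_iff]
    exact Subgroup.mem_subgroupOf.symm
  haveI : Finite (M ⧸ ρ.ker) := by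
    rw [hkerρ]
    exact hQfin
  haveI : Finite ρ.range :=
    Finite.of_equiv (M ⧸ ρ.ker) (QuotientGroup.quotientKerEquivRange ρ).toEquiv
  have hKle : K ≤ ψ.ker := subgroupP_le p M
  set q : (Fr ⧸ K) →* H := QuotientGroup.lift K ψ hKle with hq
  have hkerq : q.ker = ρ.range := by
    ext x
    induction x using QuotientGroup.induction_on with
    | _ y =>
    constructor
    · intro hy
      have hy' : ψ y = 1 := hy
      exact ⟨⟨y, hy'⟩, rfl⟩
    · rintro ⟨⟨m, hm⟩, hmx⟩
      have h2 : ψ m = ψ y := congrArg q hmx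
      show ψ y = 1
      rw [← h2]
      exact hm
  haveI : Finite q.ker := by
    rw [hkerq]
    infer_instance
  haveI : Finite ((Fr ⧸ K) ⧸ q.ker) :=
    Finite.of_equiv q.range (QuotientGroup.quotientKerEquivRange q).toEquiv.symm
  exact Finite.of_equiv _ (Subgroup.groupEquivQuotientProdSubgroup (s := q.ker)).symm

end Finiteness

/-! ### The main construction -/

section Main

variable {H : Type} [Group H] [Finite H]

lemma exists_surjectiveQ (e p : ℕ) (hp : p.Prime)
    (ψ₁ ψ₂ : FreeGroup (Fin e) →* H)
    (h1 : Function.Surjective ψ₁) (h2 : Function.Surjective ψ₂) :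
    ∃ Θ : (FreeGroup (Fin e) ⧸ subgroupP p ψ₂.ker) →*
        (FreeGroup (Fin e) ⧸ subgroupP p ψ₁.ker), Function.Surjective Θ := by
  classical
  set Fr := FreeGroup (Fin e) with hFr
  set K₁ : Subgroup Fr := subgroupP p ψ₁.ker with hK₁
  haveI : Finite (Fr ⧸ K₁) := finite_quot p hp ψ₁
  letI : Fintype (Fr ⧸ K₁) := Fintype.ofFinite _
  set π₁ : Fr →* Fr ⧸ K₁ := QuotientGroup.mk' K₁ with hπ₁
  have hK₁le : K₁ ≤ ψ₁.ker := subgroupP_le p _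
  set q₁ : (Fr ⧸ K₁) →* H := QuotientGroup.lift K₁ ψ₁ hK₁le with hq₁
  have hq₁surj : Function.Surjective q₁ := by
    intro y
    obtain ⟨w, rfl⟩ := h1 y
    exact ⟨π₁ w, rfl⟩
  have hxgen : Subgroup.closure (Set.range (fun i : Fin e => π₁ (FreeGroup.of i))) = ⊤ := by
    have h0 : (fun i : Fin e => π₁ (FreeGroup.of i)) = π₁ ∘ FreeGroup.of := rfl
    rw [h0, Set.range_comp, ← MonoidHom.map_closure, FreeGroup.closure_range_of,
      ← MonoidHom.range_eq_map, MonoidHom.range_eq_top.2 (QuotientGroup.mk'_surjective K₁)]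
  have hhgen : Subgroup.closure (Set.range (fun i : Fin e => ψ₂ (FreeGroup.of i))) = ⊤ := by
    have h0 : (fun i : Fin e => ψ₂ (FreeGroup.of i)) = ψ₂ ∘ FreeGroup.of := rfl
    rw [h0, Set.range_comp, ← MonoidHom.map_closure, FreeGroup.closure_range_of,
      ← MonoidHom.range_eq_map, MonoidHom.range_eq_top.2 h2]
  obtain ⟨g, hgf, hggen⟩ := gaschutz_s3 q₁ (fun i : Fin e => π₁ (FreeGroup.of i)) hxgen hq₁surj
    (fun i : Fin e => ψ₂ (FreeGroup.of i)) hhgen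
  set θ : Fr →* Fr ⧸ K₁ := FreeGroup.lift g with hθ
  have hθof : ∀ i, θ (FreeGroup.of i) = g i := fun i => FreeGroup.lift_apply_of
  have hcomp : ∀ w, q₁ (θ w) = ψ₂ w := by
    have hext : q₁.comp θ = ψ₂ := FreeGroup.ext_hom _ _ fun i => by
      simp only [MonoidHom.comp_apply, hθof]
      exact hgf i
    intro w
    exact DFunLike.congr_fun hext w
  have hθsurj : Function.Surjective θ := by
    rw [← MonoidHom.range_eq_top]
    have h0 : (⇑θ ∘ FreeGroup.of) = g := funext hθof
    rw [MonoidHom.range_eq_map, ← FreeGroup.closure_range_of (Fin e), MonoidHom.map_closure,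
      ← Set.range_comp, h0, hggen]
  have hker1 : ∀ x : Fr ⧸ K₁, q₁ x = 1 → ∃ u : Fr, u ∈ ψ₁.ker ∧ π₁ u = x := by
    intro x hx
    obtain ⟨u, rfl⟩ := QuotientGroup.mk'_surjective K₁ x
    exact ⟨u, hx, rfl⟩
  have habel : ∀ x y : Fr ⧸ K₁, q₁ x = 1 → q₁ y = 1 → ⁅x, y⁆ = 1 := by
    intro x y hx hy
    obtain ⟨u, hu, rfl⟩ := hker1 x hx
    obtain ⟨v, hv, rfl⟩ := hker1 y hy
    rw [← map_commutatorElement]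
    exact (QuotientGroup.eq_one_iff _).2 (commutator_mem_subgroupP hu hv)
  have hpow : ∀ x : Fr ⧸ K₁, q₁ x = 1 → x ^ p = 1 := by
    intro x hx
    obtain ⟨u, hu, rfl⟩ := hker1 x hx
    rw [← map_pow]
    exact (QuotientGroup.eq_one_iff _).2 (pow_mem_subgroupP hu)
  have hK₂le : subgroupP p ψ₂.ker ≤ θ.ker := by
    rw [subgroupP, Subgroup.closure_le]
    rintro x (⟨a, ha, b, hb, rfl⟩ | ⟨a, ha, rfl⟩)
    · show θ ⁅a, b⁆ = 1
      rw [map_commutatorElement]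
      exact habel _ _ (by rw [hcomp]; exact ha) (by rw [hcomp]; exact hb)
    · show θ (a ^ p) = 1
      rw [map_pow]
      exact hpow _ (by rw [hcomp]; exact ha)
  refine ⟨QuotientGroup.lift _ θ hK₂le, ?_⟩
  intro y
  obtain ⟨w, rfl⟩ := hθsurj y
  exact ⟨QuotientGroup.mk w, rfl⟩

end Main

/-- **Independence of the `p`-cover from the chosen projection.** If `ψ₁, ψ₂` are two
surjections from the free group of rank `e` onto the finite group `H`, with kernels
`M¹, M²`, then `F ⧸ (M¹)_p ≅ F ⧸ (M²)_p`. -/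
theorem stmt_3 (e p : ℕ) (he : 0 < e) (hp : p.Prime) (H : Type) [Group H] [Finite H]
    (ψ₁ ψ₂ : FreeGroup (Fin e) →* H)
    (h1 : Function.Surjective ψ₁) (h2 : Function.Surjective ψ₂) :
    Nonempty ((FreeGroup (Fin e) ⧸ subgroupP p ψ₁.ker) ≃*
      (FreeGroup (Fin e) ⧸ subgroupP p ψ₂.ker)) := by
  classical
  obtain ⟨Θ₁, hΘ₁⟩ := exists_surjectiveQ e p hp ψ₁ ψ₂ h1 h2
  obtain ⟨Θ₂, hΘ₂⟩ := exists_surjectiveQ e p hp ψ₂ ψ₁ h2 h1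
  haveI : Finite (FreeGroup (Fin e) ⧸ subgroupP p ψ₁.ker) := finite_quot p hp ψ₁
  haveI : Finite (FreeGroup (Fin e) ⧸ subgroupP p ψ₂.ker) := finite_quot p hp ψ₂
  letI : Fintype (FreeGroup (Fin e) ⧸ subgroupP p ψ₁.ker) := Fintype.ofFinite _
  letI : Fintype (FreeGroup (Fin e) ⧸ subgroupP p ψ₂.ker) := Fintype.ofFinite _
  have hcard : Fintype.card (FreeGroup (Fin e) ⧸ subgroupP p ψ₁.ker)
      = Fintype.card (FreeGroup (Fin e) ⧸ subgroupP p ψ₂.ker) :=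
    le_antisymm (Fintype.card_le_of_surjective _ hΘ₁) (Fintype.card_le_of_surjective _ hΘ₂)
  have hbij : Function.Bijective Θ₂ :=
    (Fintype.bijective_iff_surjective_and_card Θ₂).2 ⟨hΘ₂, hcard⟩
  exact ⟨MulEquiv.ofBijective Θ₂ hbij⟩
end

section
/- Let F be the free group on e generators, let H be a finite group of order m, and let ψ: F → H be a surjective homomorphism with kernel M. Then the quotient M/M_p is an elementary abelian p-group of order p^{1+(e-1)m}. -/
open scoped commutatorElement

instance subgroupP_subgroupOf_normal (p : ℕ) {F : Type*} [Group F] (N : Subgroup F)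
    [hN : N.Normal] : ((subgroupP p N).subgroupOf N).Normal := by
  constructor
  intro n hn g
  rw [Subgroup.mem_subgroupOf] at hn ⊢
  simpa using (subgroupP_normal p N).conj_mem _ hn g

section Alg

variable {K : Type*} [Group K] (p : ℕ)

lemma commutator_mem_subgroupP_top (a b : K) : ⁅a, b⁆ ∈ subgroupP p (⊤ : Subgroup K) :=
  Subgroup.subset_closure (Or.inl ⟨a, trivial, b, trivial, rfl⟩)

lemma pow_mem_subgroupP_top (a : K) : a ^ p ∈ subgroupP p (⊤ : Subgroup K) :=
  Subgroup.subset_closure (Or.inr ⟨a, trivial, rfl⟩)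

instance subgroupP_top_normal : (subgroupP p (⊤ : Subgroup K)).Normal := by
  constructor
  intro n hn g
  have : g * n * g⁻¹ = ⁅g, n⁆ * n := by group
  rw [this]
  exact Subgroup.mul_mem _ (commutator_mem_subgroupP_top p g n) hn

lemma quot_mul_comm (a b : K ⧸ subgroupP p (⊤ : Subgroup K)) : a * b = b * a := by
  induction a using QuotientGroup.induction_on
  induction b using QuotientGroup.induction_on
  rename_i x y
  rw [← QuotientGroup.mk_mul, ← QuotientGroup.mk_mul, QuotientGroup.eq]
  have : (x * y)⁻¹ * (y * x) = ⁅(x*y)⁻¹, x⁻¹⁆ := by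
    simp only [commutatorElement_def]; group
  rw [this]
  exact commutator_mem_subgroupP_top p _ _

lemma quot_pow_eq_one (a : K ⧸ subgroupP p (⊤ : Subgroup K)) : a ^ p = 1 := by
  induction a using QuotientGroup.induction_on
  rename_i x
  rw [← QuotientGroup.mk_pow, QuotientGroup.eq_one_iff]
  exact pow_mem_subgroupP_top p x

variable {ι : Type*} (b : FreeGroupBasis ι K) (hp : p.Prime)

/-- The canonical map `K →* Multiplicative (ι →₀ ZMod p)`. -/
noncomputable def phiP : K →* Multiplicative (ι →₀ ZMod p) :=
  b.lift (fun i => Multiplicative.ofAdd (Finsupp.single i 1))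

lemma phiP_of (i : ι) : phiP p b (b i) = Multiplicative.ofAdd (Finsupp.single i 1) := by
  simp [phiP]

lemma phiP_surjective (hp : p.Prime) : Function.Surjective (phiP p b) := by
  haveI : Fact p.Prime := ⟨hp⟩
  intro v
  have h : ∀ w : ι →₀ ZMod p, ∃ x, phiP p b x = Multiplicative.ofAdd w := by
    intro w
    induction w using Finsupp.induction with
    | zero => exact ⟨1, by simp⟩
    | single_add i c f hif hc ih =>
      obtain ⟨x, hx⟩ := ih
      refine ⟨(b i) ^ (c.val) * x, ?_⟩
      rw [map_mul, map_pow, phiP_of, hx, ← ofAdd_nsmul, ← ofAdd_add]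
      have hcv : (c.val : ℕ) • (1 : ZMod p) = c := by
        rw [nsmul_eq_mul, mul_one]; exact ZMod.natCast_rightInverse c
      rw [Finsupp.smul_single, hcv]
  obtain ⟨x, hx⟩ := h v.toAdd
  exact ⟨x, by rw [hx]; simp⟩

lemma ker_phiP (hp : p.Prime) : (phiP p b).ker = subgroupP p (⊤ : Subgroup K) := by
  haveI : Fact p.Prime := ⟨hp⟩
  apply le_antisymm
  · -- hard direction via inverse hom
    letI instCG : CommGroup (K ⧸ subgroupP p (⊤ : Subgroup K)) :=
      { (inferInstance : Group (K ⧸ subgroupP p (⊤ : Subgroup K))) with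
        mul_comm := quot_mul_comm p }
    letI : Module (ZMod p) (Additive (K ⧸ subgroupP p (⊤ : Subgroup K))) :=
      AddCommGroup.zmodModule (by
        intro x
        have h := quot_pow_eq_one p (Additive.toMul x)
        rw [← toMul_nsmul] at h
        exact Additive.toMul.injective h)
    let Q := K ⧸ subgroupP p (⊤ : Subgroup K)
    let g0 : (ι →₀ ZMod p) →ₗ[ZMod p] Additive Q :=
      Finsupp.lift (Additive Q) (ZMod p) ι (fun i => Additive.ofMul (QuotientGroup.mk (b i)))
    let g : Multiplicative (ι →₀ ZMod p) →* Q :=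
      AddMonoidHom.toMultiplicativeLeft g0.toAddMonoidHom
    have hcomp : g.comp (phiP p b) = QuotientGroup.mk' (subgroupP p (⊤ : Subgroup K)) := by
      apply b.ext_hom
      intro i
      show g (phiP p b (b i)) = QuotientGroup.mk (b i)
      rw [phiP_of]
      show Additive.toMul (g0.toAddMonoidHom (Finsupp.single i 1)) = QuotientGroup.mk (b i)
      rw [LinearMap.toAddMonoidHom_coe]
      simp [g0]
    intro x hx
    rw [MonoidHom.mem_ker] at hx
    have h2 : QuotientGroup.mk' (subgroupP p (⊤ : Subgroup K)) x = 1 := by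
      rw [← hcomp, MonoidHom.comp_apply, hx, map_one]
    exact (QuotientGroup.eq_one_iff x).mp h2
  · rw [subgroupP, Subgroup.closure_le]
    rintro x (⟨a, -, c, -, rfl⟩ | ⟨a, -, rfl⟩)
    · rw [SetLike.mem_coe, MonoidHom.mem_ker, map_commutatorElement]
      exact commutatorElement_eq_one_iff_commute.2 (mul_comm _ _)
    · rw [SetLike.mem_coe, MonoidHom.mem_ker, map_pow, ← ofAdd_toAdd (phiP p b a),
        ← ofAdd_nsmul]
      suffices hz : p • Multiplicative.toAdd (phiP p b a) = 0 by rw [hz]; rfl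
      ext i
      simp [ZMod.natCast_self]

include b in
lemma card_quot_subgroupP_top [Finite ι] (hp : p.Prime) :
    Nat.card (K ⧸ subgroupP p (⊤ : Subgroup K)) = p ^ Nat.card ι := by
  haveI : Fact p.Prime := ⟨hp⟩
  have e1 : (K ⧸ subgroupP p (⊤ : Subgroup K)) ≃* Multiplicative (ι →₀ ZMod p) :=
    (QuotientGroup.quotientMulEquivOfEq (ker_phiP p b hp).symm).trans
      (QuotientGroup.quotientKerEquivOfSurjective _ (phiP_surjective p b hp))
  rw [Nat.card_congr e1.toEquiv, Nat.card_congr Multiplicative.toAdd,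
    Nat.card_congr (Finsupp.equivFunOnFinite), Nat.card_fun, Nat.card_zmod]

lemma subgroupP_subgroupOf {F : Type*} [Group F] (M : Subgroup F) :
    (subgroupP p M).subgroupOf M = subgroupP p (⊤ : Subgroup M) := by
  have hmap : (subgroupP p (⊤ : Subgroup M)).map M.subtype = subgroupP p M := by
    rw [subgroupP, subgroupP, MonoidHom.map_closure]
    congr 1
    rw [Set.image_union]
    congr 1
    · ext x
      constructor
      · rintro ⟨y, ⟨a, -, c, -, rfl⟩, rfl⟩
        exact ⟨a, a.2, c, c.2, rfl⟩
      · rintro ⟨a, ha, c, hc, rfl⟩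
        exact ⟨⁅(⟨a, ha⟩ : M), (⟨c, hc⟩ : M)⁆, ⟨⟨a, ha⟩, trivial, ⟨c, hc⟩, trivial, rfl⟩, rfl⟩
    · ext x
      constructor
      · rintro ⟨y, ⟨a, -, rfl⟩, rfl⟩
        exact ⟨a, a.2, rfl⟩
      · rintro ⟨a, ha, rfl⟩
        exact ⟨(⟨a, ha⟩ : M) ^ p, ⟨⟨a, ha⟩, trivial, rfl⟩, rfl⟩
  rw [← hmap, Subgroup.subgroupOf,
    Subgroup.comap_map_eq_self_of_injective M.subtype_injective]

end Alg

noncomputable section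

open scoped Classical

universe v u

open CategoryTheory CategoryTheory.ActionCategory CategoryTheory.SingleObj Quiver FreeGroup
open IsFreeGroupoid

namespace MyFree

/-- Unique lift property for a free group basis. -/
theorem basis_unique_lift {ι : Type*} {G : Type*} {X : Type*} [Group G] [Group X]
    (b : FreeGroupBasis ι G) (f : ι → X) : ∃! F : G →* X, ∀ a, F (b a) = f a := by
  refine ⟨b.lift f, fun a => congr_fun (b.lift.symm_apply_apply f) a, fun F hF => ?_⟩
  apply b.ext_hom
  intro i
  rw [hF i]
  exact (congr_fun (b.lift.symm_apply_apply f) i).symm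

/-- The action groupoid of a group with an explicit free group basis is a free groupoid,
with generating arrows indexed by the basis. -/
def actionGroupoidFreeOfBasis {G A : Type u} [Group G] {ι : Type u} (bs : FreeGroupBasis ι G)
    [MulAction G A] : IsFreeGroupoid (ActionCategory G A) where
  quiverGenerators :=
    ⟨fun a b => { e : ι // bs e • a.back = b.back }⟩
  of := fun (e : { e // _ }) => ⟨bs e, e.property⟩
  unique_lift := by
    intro X _ f
    let f' : ι → (A → X) ⋊[mulAutArrow] G := fun e =>
      ⟨fun b => @f ⟨(), _⟩ ⟨(), b⟩ ⟨e, smul_inv_smul _ b⟩, bs e⟩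
    rcases basis_unique_lift bs f' with ⟨F', hF', uF'⟩
    refine ⟨uncurry F' ?_, ?_, ?_⟩
    · suffices SemidirectProduct.rightHom.comp F' = MonoidHom.id _ by
        exact DFunLike.ext_iff.mp this
      apply bs.ext_hom
      intro x
      rw [MonoidHom.comp_apply, hF']
      rfl
    · rintro ⟨⟨⟩, a : A⟩ ⟨⟨⟩, b⟩ ⟨e, h : bs e • a = b⟩
      change (F' (bs _)).left _ = _
      rw [hF']
      cases inv_smul_eq_iff.mpr h.symm
      rfl
    · intro E hE
      have : curry E = F' := by
        apply uF'
        intro e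
        ext
        · convert! hE _ _ _
          rfl
        · rfl
      apply Functor.hext
      · intro
        apply Unit.ext
      · refine ActionCategory.cases ?_
        intros
        subst this
        rfl

end MyFree

namespace MyFree

section SpanningTree

variable {G : Type u} [Groupoid.{u} G] [IsFreeGroupoid G]
  (T : WideSubquiver (Symmetrify <| Generators G)) [Arborescence T]

/-- The root of `T`, except its type is `G` instead of the type synonym `T`. -/
def root' : G :=
  show T from root T

/-- A path in the tree gives a hom, by composition. -/
def homOfPath : ∀ {a : G}, Path (root T) a → (root' T ⟶ a)
  | _, Path.nil => 𝟙 _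
  | _, Path.cons p f => homOfPath p ≫ Sum.recOn f.val (fun e => of e) fun e => @inv G _ _ _ (of e) (@IsIso.of_groupoid G _ _ _ (of e))

/-- For every vertex `a`, there is a canonical hom from the root, given by the path in the tree. -/
def treeHom (a : G) : root' T ⟶ a :=
  homOfPath T (Arborescence.uniquePath (V := T) a).toInhabited.default

/-- Any path to `a` gives `treeHom T a`, since paths in the tree are unique. -/
theorem treeHom_eq {a : G} (p : Path (root T) a) : treeHom T a = homOfPath T p := by
  rw [treeHom]
  congr 1
  exact ((Arborescence.uniquePath (V := T) a).uniq p).symm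

@[simp]
theorem treeHom_root : treeHom T (root' T) = 𝟙 _ :=
  _root_.trans (treeHom_eq T Path.nil) rfl

/-- Any hom in `G` can be made into a loop, by conjugating with `treeHom`s. -/
def loopOfHom {a b : G} (p : a ⟶ b) : End (root' T) :=
  treeHom T a ≫ p ≫ inv (treeHom T b)

/-- Turning an edge in the spanning tree into a loop gives the identity loop. -/
theorem loopOfHom_eq_id {a b : Generators G} (e) (H : e ∈ wideSubquiverSymmetrify T a b) :
    loopOfHom T (of e) = 𝟙 (root' T) := by
  erw [loopOfHom, ← Category.assoc, IsIso.comp_inv_eq, Category.id_comp]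
  cases' H with H H
  · erw [treeHom_eq T (Path.cons (default : Path (root T) (show T from a)) ⟨Sum.inl e, H⟩),
      homOfPath]
    rfl
  · erw [treeHom_eq T (Path.cons (default : Path (root T) (show T from b)) ⟨Sum.inr e, H⟩),
      homOfPath]
    erw [Category.assoc, IsIso.inv_hom_id, Category.comp_id]
    exact (treeHom_eq T _).symm

/-- Since a hom gives a loop, any homomorphism from the vertex group at the root
    extends to a functor on the whole groupoid. -/
@[simps]
def functorOfMonoidHom {X} [Monoid X] (f : End (root' T) →* X) :
    G ⥤ CategoryTheory.SingleObj X where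
  obj _ := ()
  map p := f (loopOfHom T p)
  map_id := by
    intro a
    dsimp only [loopOfHom]
    rw [Category.id_comp, IsIso.hom_inv_id, ← End.one_def, f.map_one, id_as_one]
  map_comp := by
    intros
    rw [comp_as_mul, ← f.map_mul]
    simp only [IsIso.inv_hom_id_assoc, loopOfHom, End.mul_def, Category.assoc]

/-- Given a free groupoid and an arborescence of its generating quiver, the vertex
    group at the root is freely generated by loops coming from generating arrows
    in the complement of the tree. -/
def endBasis : FreeGroupBasis
    ((wideSubquiverEquivSetTotal <| wideSubquiverSymmetrify T)ᶜ : Set _) (End (root' T)) :=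
  FreeGroupBasis.ofUniqueLift ((wideSubquiverEquivSetTotal <| wideSubquiverSymmetrify T)ᶜ : Set _)
    (fun e => loopOfHom T (of e.val.hom))
    (by
      intro X _ f
      let f' : Labelling (Generators G) X := fun a b e =>
        if h : e ∈ wideSubquiverSymmetrify T a b then 1 else f ⟨⟨a, b, e⟩, h⟩
      rcases unique_lift f' with ⟨F', hF', uF'⟩
      refine ⟨F'.mapEnd _, ?_, ?_⟩
      · suffices ∀ {x y} (q : x ⟶ y), F'.map (loopOfHom T q) = (F'.map q : X) by
          rintro ⟨⟨a, b, e⟩, h⟩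
          erw [Functor.mapEnd_apply, this, hF']
          exact dif_neg h
        intros x y q
        suffices ∀ {a} (p : Path (root T) a), F'.map (homOfPath T p) = 1 by
          simp only [this, treeHom, comp_as_mul, inv_as_inv, loopOfHom, inv_one, mul_one,
            one_mul, Functor.map_inv, Functor.map_comp]
          have h1 : F'.map (homOfPath T (Arborescence.uniquePath (V := T) x).toInhabited.default)
              = 1 := this _
          have h2 : F'.map (homOfPath T (Arborescence.uniquePath (V := T) y).toInhabited.default)
              = 1 := this _
          rw [h1, h2, inv_one, one_mul, mul_one]
        intro a p
        induction' p with b c p e ih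
        · rw [homOfPath]
          exact F'.map_id _
        erw [homOfPath, F'.map_comp, comp_as_mul, ih, mul_one]
        rcases e with ⟨e | e, eT⟩
        · erw [hF']
          exact dif_pos (Or.inl eT)
        · erw [F'.map_inv, inv_as_inv, inv_eq_one, hF']
          exact dif_pos (Or.inr eT)
      · intro E hE
        ext x
        suffices (functorOfMonoidHom T E).map x = F'.map x by
          simpa only [loopOfHom, functorOfMonoidHom, IsIso.inv_id, treeHom_root,
            Category.id_comp, Category.comp_id] using! this
        congr
        apply uF'
        intro a b e
        change E (loopOfHom T _) = dite _ _ _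
        split_ifs with h
        · rw [loopOfHom_eq_id T e h, ← End.one_def, E.map_one]
        · exact hE ⟨⟨a, b, e⟩, h⟩)

end SpanningTree

end MyFree

namespace MyFree

/-- Identity, with the type of the symmetrified generators. -/
def symgen' {G : Type u} [Groupoid.{v} G] [IsFreeGroupoid G] : G → Symmetrify (Generators G) :=
  id

instance symgen'_rootedConnected {G : Type u} [Groupoid.{u} G] [IsConnected G] [IsFreeGroupoid G]
    (r : G) : RootedConnected (symgen' r) :=
  ⟨fun b => path_nonempty_of_hom (CategoryTheory.nonempty_hom_of_preconnected_groupoid r b)⟩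

/-- Basis of the vertex group of a connected free groupoid. -/
def endBasisOfConnectedFree {G : Type u} [Groupoid.{u} G] [IsConnected G] [IsFreeGroupoid G]
    (r : G) :
    FreeGroupBasis
      ((wideSubquiverEquivSetTotal <|
        wideSubquiverSymmetrify (geodesicSubtree (symgen' r)))ᶜ : Set _) (End r) :=
  endBasis (geodesicSubtree (symgen' r))

end MyFree

end

noncomputable section
open scoped Classical
universe u
open Quiver

namespace MyFree

section TreeCount

variable {V : Type u} [Quiver.{u} V] (T : WideSubquiver (Symmetrify V)) [Arborescence T]

lemma default_path_root : (default : Path (root T) (root T)) = Path.nil :=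
  Subsingleton.elim _ _

lemma ht_edge {a b : T} (ε : a ⟶ b) :
    (default : Path (root T) b).length = (default : Path (root T) a).length + 1 := by
  have h : (default : Path (root T) a).cons ε = (default : Path (root T) b) :=
    Subsingleton.elim _ _
  rw [← h, Path.length_cons]

lemma target_ne_root {a b : T} (ε : a ⟶ b) : b ≠ root T := by
  intro h
  subst h
  have h0 : (default : Path (root T) a).cons ε = Path.nil := Subsingleton.elim _ _
  have h1 := congrArg Path.length h0
  rw [Path.length_cons] at h1
  simp at h1

/-- The map sending an edge of the arborescence to its target. -/
def toVertex (e : Total T) : {v : T // v ≠ root T} :=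
  ⟨e.right, target_ne_root T e.hom⟩

lemma toVertex_bijective : Function.Bijective (toVertex T) := by
  constructor
  · rintro ⟨a, b, ε⟩ ⟨a', b', ε'⟩ h
    have hb : b = b' := congrArg Subtype.val h
    subst hb
    have h2 : (default : Path (root T) a).cons ε = (default : Path (root T) a').cons ε' :=
      Subsingleton.elim _ _
    have ha : a = a' := Path.obj_eq_of_cons_eq_cons h2
    subst ha
    have hε : ε = ε' := by
      have := Path.hom_heq_of_cons_eq_cons h2
      exact eq_of_heq this
    subst hε
    rfl
  · rintro ⟨v, hv⟩
    cases hp : (default : Path (root T) v) with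
    | nil => exact absurd rfl hv
    | cons p ε => exact ⟨⟨_, v, ε⟩, Subtype.ext rfl⟩

lemma not_both_orientations {a b : V} (x : a ⟶ b) :
    ¬(Sum.inl x ∈ T a b ∧ Sum.inr x ∈ T b a) := by
  rintro ⟨h1, h2⟩
  let ε1 : (show T from a) ⟶ (show T from b) := ⟨Sum.inl x, h1⟩
  let ε2 : (show T from b) ⟶ (show T from a) := ⟨Sum.inr x, h2⟩
  have k1 := ht_edge T ε1
  have k2 := ht_edge T ε2
  omega

/-- The map sending an edge of the tree (as an edge of `Symmetrify V`) to the underlying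
edge of `V`. -/
def toTotal : Total T → Total V
  | ⟨a, b, ⟨Sum.inl x, _⟩⟩ => ⟨a, b, x⟩
  | ⟨a, b, ⟨Sum.inr x, _⟩⟩ => ⟨b, a, x⟩

lemma toTotal_injective : Function.Injective (toTotal T) := by
  rintro ⟨a, b, ⟨x | x, hx⟩⟩ ⟨a', b', ⟨x' | x', hx'⟩⟩ h <;>
    simp only [toTotal, Total.mk.injEq] at h <;>
    obtain ⟨h1, h2, h3⟩ := Total.mk.inj h
  · subst h1; subst h2; obtain rfl := eq_of_heq h3; rfl
  · subst h1; subst h2; obtain rfl := eq_of_heq h3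
    exact absurd ⟨hx, hx'⟩ (not_both_orientations T x)
  · subst h1; subst h2; obtain rfl := eq_of_heq h3
    exact absurd ⟨hx', hx⟩ (not_both_orientations T x)
  · subst h1; subst h2; obtain rfl := eq_of_heq h3; rfl

lemma range_toTotal :
    Set.range (toTotal T) = (wideSubquiverEquivSetTotal (wideSubquiverSymmetrify T)) := by
  ext ⟨a, b, x⟩
  constructor
  · rintro ⟨⟨c, d, ⟨y | y, hy⟩⟩, h⟩ <;> simp only [toTotal, Total.mk.injEq] at h <;>
      obtain ⟨h1, h2, h3⟩ := Total.mk.inj h <;> subst h1 <;> subst h2 <;> rw [eq_of_heq h3] at hy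
    · exact Or.inl hy
    · exact Or.inr hy
  · rintro (h | h)
    · exact ⟨⟨a, b, ⟨Sum.inl x, h⟩⟩, rfl⟩
    · exact ⟨⟨b, a, ⟨Sum.inr x, h⟩⟩, rfl⟩

lemma card_treeSet [Finite V] :
    Nat.card (↥(wideSubquiverEquivSetTotal (wideSubquiverSymmetrify T))) = Nat.card V - 1 := by
  have h1 : Nat.card (↥(wideSubquiverEquivSetTotal (wideSubquiverSymmetrify T)))
      = Nat.card (Total T) := by
    rw [← range_toTotal]
    exact (Nat.card_congr (Equiv.ofInjective _ (toTotal_injective T))).symm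
  have h2 : Nat.card (Total T) = Nat.card {v : T // v ≠ root T} :=
    Nat.card_eq_of_bijective _ (toVertex_bijective T)
  haveI : Finite (WideSubquiver.toType (Symmetrify V) T) := ‹Finite V›
  have h3 : Nat.card {v : T // v ≠ root T} = Nat.card V - 1 := by
    have e1 : {v : T // v ≠ root T} ≃ (↥({root T}ᶜ : Set T)) :=
      Equiv.subtypeEquivRight (fun v => by simp)
    rw [Nat.card_congr e1, Nat.card_coe_set_eq]
    have h4 := Set.ncard_add_ncard_compl ({root T} : Set T)
    rw [Set.ncard_singleton] at h4
    have h6 : (Set.univ : Set (WideSubquiver.toType (Symmetrify V) T)).ncard = Nat.card V :=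
      Set.ncard_univ _
    have h7 : Nat.card (WideSubquiver.toType (Symmetrify V) T) = Nat.card V := rfl
    omega
  rw [h1, h2, h3]

end TreeCount

end MyFree
end


noncomputable section
namespace MyFree
open CategoryTheory CategoryTheory.ActionCategory Quiver IsFreeGroupoid

lemma total_equiv {G A : Type u} [Group G] [MulAction G A] {ι : Type u}
    (bs : FreeGroupBasis ι G) :
    letI := actionGroupoidFreeOfBasis (A := A) bs
    Nonempty (Total (Generators (ActionCategory G A)) ≃ ι × A) := by
  letI := actionGroupoidFreeOfBasis (A := A) bs
  refine ⟨⟨fun t => (t.hom.val, t.left.back),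
    fun x => ⟨((x.2 : ActionCategory G A) : Generators (ActionCategory G A)),
      (((bs x.1 • x.2 : A) : ActionCategory G A) : Generators (ActionCategory G A)),
      ⟨x.1, rfl⟩⟩, ?_, ?_⟩⟩
  · rintro ⟨⟨⟨⟩, (a : A)⟩, ⟨⟨⟩, (b : A)⟩, ⟨x, (h : bs x • a = b)⟩⟩
    obtain rfl := h
    rfl
  · rintro ⟨x, a⟩
    rfl


end MyFree
end

/-- **Gaschütz / Nielsen–Schreier.** If `ψ` is a surjection from the free group of rank `e`
onto a finite group `H` of order `m`, with kernel `M`, then `M ⧸ M_p` is an elementary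
abelian `p`-group of order `p ^ (1 + (e-1)m)`. -/
theorem stmt_4 (e p : ℕ) (he : 0 < e) (hp : p.Prime) (H : Type) [Group H] [Finite H]
    (ψ : FreeGroup (Fin e) →* H) (hψ : Function.Surjective ψ) :
    (∀ a b : ψ.ker ⧸ (subgroupP p ψ.ker).subgroupOf ψ.ker, a * b = b * a) ∧
    (∀ a : ψ.ker ⧸ (subgroupP p ψ.ker).subgroupOf ψ.ker, a ^ p = 1) ∧
    Nat.card (ψ.ker ⧸ (subgroupP p ψ.ker).subgroupOf ψ.ker)
      = p ^ (1 + (e - 1) * Nat.card H) := by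
  classical
  have hsub : (subgroupP p ψ.ker).subgroupOf ψ.ker = subgroupP p (⊤ : Subgroup ψ.ker) :=
    subgroupP_subgroupOf p ψ.ker
  let f : (ψ.ker ⧸ (subgroupP p ψ.ker).subgroupOf ψ.ker) ≃*
      (ψ.ker ⧸ subgroupP p (⊤ : Subgroup ψ.ker)) :=
    QuotientGroup.quotientMulEquivOfEq hsub
  refine ⟨?_, ?_, ?_⟩
  · intro a b
    apply f.injective
    rw [map_mul, map_mul]
    exact quot_mul_comm p (f a) (f b)
  · intro a
    apply f.injective
    rw [map_pow, map_one]
    exact quot_pow_eq_one p (f a)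
  rw [Nat.card_congr f.toEquiv]
  let eH : (FreeGroup (Fin e) ⧸ ψ.ker) ≃* H := QuotientGroup.quotientKerEquivOfSurjective ψ hψ
  haveI : Finite (FreeGroup (Fin e) ⧸ ψ.ker) := Finite.of_equiv H eH.symm.toEquiv
  letI iFG : IsFreeGroupoid
      (CategoryTheory.ActionCategory (FreeGroup (Fin e)) (FreeGroup (Fin e) ⧸ ψ.ker)) :=
    MyFree.actionGroupoidFreeOfBasis (A := FreeGroup (Fin e) ⧸ ψ.ker)
      (FreeGroupBasis.ofFreeGroup (Fin e))
  let r := CategoryTheory.ActionCategory.objEquiv (FreeGroup (Fin e))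
    (FreeGroup (Fin e) ⧸ ψ.ker) ↑(1 : FreeGroup (Fin e))
  haveI hConn : @CategoryTheory.IsConnected
      (CategoryTheory.ActionCategory (FreeGroup (Fin e)) (FreeGroup (Fin e) ⧸ ψ.ker))
      CategoryTheory.Groupoid.toCategory := (inferInstance : CategoryTheory.IsConnected
        (CategoryTheory.ActionCategory (FreeGroup (Fin e)) (FreeGroup (Fin e) ⧸ ψ.ker)))
  set E : Set (Quiver.Total (IsFreeGroupoid.Generators
      (CategoryTheory.ActionCategory (FreeGroup (Fin e)) (FreeGroup (Fin e) ⧸ ψ.ker)))) :=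
    Quiver.wideSubquiverEquivSetTotal
      (Quiver.wideSubquiverSymmetrify (Quiver.geodesicSubtree (MyFree.symgen' r))) with hEdef
  let bEnd := MyFree.endBasisOfConnectedFree r
  let bM := bEnd.map (CategoryTheory.ActionCategory.endMulEquivSubgroup ψ.ker)
  obtain ⟨eT⟩ := MyFree.total_equiv (A := FreeGroup (Fin e) ⧸ ψ.ker)
    (FreeGroupBasis.ofFreeGroup (Fin e))
  haveI hFinTot : Finite (Quiver.Total (IsFreeGroupoid.Generators
      (CategoryTheory.ActionCategory (FreeGroup (Fin e)) (FreeGroup (Fin e) ⧸ ψ.ker)))) :=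
    Finite.of_equiv _ eT.symm
  haveI hFinV : Finite (IsFreeGroupoid.Generators
      (CategoryTheory.ActionCategory (FreeGroup (Fin e)) (FreeGroup (Fin e) ⧸ ψ.ker))) :=
    Finite.of_equiv _ (CategoryTheory.ActionCategory.objEquiv (FreeGroup (Fin e))
      (FreeGroup (Fin e) ⧸ ψ.ker))
  have hm : Nat.card (FreeGroup (Fin e) ⧸ ψ.ker) = Nat.card H := Nat.card_congr eH.toEquiv
  have hV : Nat.card (IsFreeGroupoid.Generators
      (CategoryTheory.ActionCategory (FreeGroup (Fin e)) (FreeGroup (Fin e) ⧸ ψ.ker)))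
      = Nat.card H :=
    Nat.card_congr (((CategoryTheory.ActionCategory.objEquiv (FreeGroup (Fin e))
      (FreeGroup (Fin e) ⧸ ψ.ker)).symm).trans eH.toEquiv)
  have hTot : Nat.card (Quiver.Total (IsFreeGroupoid.Generators
      (CategoryTheory.ActionCategory (FreeGroup (Fin e)) (FreeGroup (Fin e) ⧸ ψ.ker))))
      = e * Nat.card H := by
    rw [Nat.card_congr eT, Nat.card_prod, hm, Nat.card_eq_fintype_card, Fintype.card_fin]
  have hE : Nat.card ↥E = Nat.card H - 1 := by
    rw [hEdef, ← hV]
    exact MyFree.card_treeSet _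
  have hm1 : 0 < Nat.card H := Nat.card_pos
  have hS : Nat.card ↥(Eᶜ) = 1 + (e - 1) * Nat.card H := by
    have h1 : Nat.card ↥E + Nat.card ↥(Eᶜ) = e * Nat.card H := by
      rw [Nat.card_coe_set_eq, Nat.card_coe_set_eq, ← hTot]
      exact Set.ncard_add_ncard_compl E
    obtain ⟨e', rfl⟩ : ∃ e', e = e' + 1 := ⟨e - 1, by omega⟩
    have h2 : (e' + 1) * Nat.card H = e' * Nat.card H + Nat.card H := by ring
    rw [h2] at h1
    have h3 : (e' + 1 - 1) = e' := by omega
    rw [h3, hE] at *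
    generalize hk : e' * Nat.card H = k at h1 ⊢
    omega
  rw [card_quot_subgroupP_top p bM hp, hS]
end

section
/- Let ψ: F → H be surjective with kernel M and set M_p = [M,M]·M^{[p]}. Then Ψ_p induces a group isomorphism F/M_p ≅ Ψ_p(F). Moreover, Ψ_p(M) is contained in the abelian normal subgroup ((ℤ/pℤ)^H)^e of (W_p)^e, and the induced isomorphism M/M_p → Ψ_p(M) is H-equivariant: for f ∈ F with ψ(f) = h, it carries the conjugation action of f on M/M_p to the conjugation action of Ψ_p(f) on Ψ_p(M). -/
/-- The underlying set of the wreath-product-like group `H ⋉ Aᴴ`, in which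
`(a, v) * (b, w) = (a * b, v^b + w)` where `(v^b) g = v (g * b⁻¹)`
(so that the indicator function of `g` is sent by `b` to the indicator function of `g * b`). -/
def Wr (H A : Type*) : Type _ := H × (H → A)

namespace Wr

variable {H A : Type*} [Group H] [AddCommGroup A]

instance : Mul (Wr H A) := ⟨fun x y => ⟨x.1 * y.1, (fun g => x.2 (g * y.1⁻¹)) + y.2⟩⟩
instance : One (Wr H A) := ⟨⟨1, 0⟩⟩
instance : Inv (Wr H A) := ⟨fun x => ⟨x.1⁻¹, fun g => -(x.2 (g * x.1))⟩⟩

theorem mul_def (x y : Wr H A) :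
    x * y = ⟨x.1 * y.1, (fun g => x.2 (g * y.1⁻¹)) + y.2⟩ := rfl
theorem one_def : (1 : Wr H A) = ⟨1, 0⟩ := rfl
theorem inv_def (x : Wr H A) : x⁻¹ = ⟨x.1⁻¹, fun g => -(x.2 (g * x.1))⟩ := rfl

theorem ext' {x y : Wr H A} (h1 : x.1 = y.1) (h2 : x.2 = y.2) : x = y := Prod.ext h1 h2

instance : Group (Wr H A) where
  mul := (· * ·)
  one := 1
  inv := (·⁻¹)
  mul_assoc x y z := by
    refine ext' (mul_assoc _ _ _) ?_
    show (fun g => ((fun g' => x.2 (g' * y.1⁻¹)) + y.2) (g * z.1⁻¹)) + z.2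
        = (fun g => x.2 (g * (y.1 * z.1)⁻¹)) + ((fun g => y.2 (g * z.1⁻¹)) + z.2)
    funext g
    simp [mul_inv_rev, mul_assoc, add_assoc]
  one_mul x := by
    refine ext' (one_mul _) ?_
    show (fun g => (0 : H → A) (g * x.1⁻¹)) + x.2 = x.2
    funext g
    simp
  mul_one x := by
    refine ext' (mul_one _) ?_
    show (fun g => x.2 (g * (1 : H)⁻¹)) + 0 = x.2
    funext g
    simp
  inv_mul_cancel x := by
    refine ext' (inv_mul_cancel _) ?_
    show (fun g => (fun g' => -(x.2 (g' * x.1))) (g * x.1⁻¹)) + x.2 = 0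
    funext g
    simp [mul_assoc]

end Wr

open scoped commutatorElement

namespace Wr

variable {H A : Type*} [Group H] [AddCommGroup A]

-- Auxiliary lemmas
theorem fst_mul (x y : Wr H A) : (x * y).1 = x.1 * y.1 := rfl
theorem snd_mul (x y : Wr H A) : (x * y).2 = (fun g => x.2 (g * y.1⁻¹)) + y.2 := rfl
theorem fst_inv (x : Wr H A) : (x⁻¹).1 = x.1⁻¹ := rfl
theorem snd_inv (x : Wr H A) : (x⁻¹).2 = fun g => -(x.2 (g * x.1)) := rfl
theorem fst_one : (1 : Wr H A).1 = 1 := rfl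
theorem snd_one : (1 : Wr H A).2 = 0 := rfl

theorem comm_of_fst {x y : Wr H A} (hx : x.1 = 1) (hy : y.1 = 1) : x * y = y * x := by
  refine ext' ?_ ?_
  · rw [fst_mul, fst_mul, hx, hy]
  · rw [snd_mul, snd_mul, hx, hy]
    funext g
    simp [add_comm]

theorem pow_of_fst {x : Wr H A} (hx : x.1 = 1) (n : ℕ) : x ^ n = ⟨1, n • x.2⟩ := by
  induction n with
  | zero => rw [pow_zero, one_def]; exact ext' rfl (zero_smul ℕ x.2).symm
  | succ n ih =>
    rw [pow_succ, ih]
    refine ext' ?_ ?_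
    · show 1 * x.1 = 1; rw [hx, mul_one]
    · show (fun g => (n • x.2) (g * x.1⁻¹)) + x.2 = (n + 1) • x.2
      rw [hx]
      funext g
      simp [succ_nsmul]

/-- projection to the first factor as a `MonoidHom`. -/
def fstHom : Wr H A →* H := { toFun := fun x => x.1, map_one' := rfl, map_mul' := fun _ _ => rfl }

end Wr

theorem mem_subgroupP_commutator (p : ℕ) {F : Type*} [Group F] {N : Subgroup F} {a b : F}
    (ha : a ∈ N) (hb : b ∈ N) : ⁅a, b⁆ ∈ subgroupP p N :=
  Subgroup.subset_closure (Or.inl ⟨a, ha, b, hb, rfl⟩)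

theorem mem_subgroupP_pow (p : ℕ) {F : Type*} [Group F] {N : Subgroup F} {a : F} (ha : a ∈ N) :
    a ^ p ∈ subgroupP p N :=
  Subgroup.subset_closure (Or.inr ⟨a, ha, rfl⟩)

/-- The image of `N` in `F ⧸ subgroupP p N`. -/
def Vsub (p : ℕ) {F : Type*} [Group F] (N : Subgroup F) [N.Normal] :
    Subgroup (F ⧸ subgroupP p N) := N.map (QuotientGroup.mk' (subgroupP p N))

instance VsubComm (p : ℕ) {F : Type*} [Group F] (N : Subgroup F) [N.Normal] :
    CommGroup (Vsub p N) :=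
  { (inferInstance : Group (Vsub p N)) with
    mul_comm := by
      rintro ⟨x, a, ha, rfl⟩ ⟨y, b, hb, rfl⟩
      refine Subtype.ext ?_
      show QuotientGroup.mk' (subgroupP p N) a * QuotientGroup.mk' (subgroupP p N) b
          = QuotientGroup.mk' (subgroupP p N) b * QuotientGroup.mk' (subgroupP p N) a
      rw [← map_mul, ← map_mul]
      simp only [QuotientGroup.mk'_apply]
      rw [QuotientGroup.eq]
      have h2 : (a * b)⁻¹ * (b * a) = ⁅b⁻¹, a⁻¹⁆ := by
        rw [commutatorElement_def]; group
      rw [h2]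
      exact mem_subgroupP_commutator p (inv_mem hb) (inv_mem ha) }

theorem Vsub_pow_eq_one (p : ℕ) {F : Type*} [Group F] (N : Subgroup F) [N.Normal]
    (v : Vsub p N) : v ^ p = 1 := by
  obtain ⟨x, a, ha, rfl⟩ := v
  refine Subtype.ext ?_
  show (QuotientGroup.mk' (subgroupP p N) a) ^ p = 1
  rw [← map_pow]
  simp only [QuotientGroup.mk'_apply]
  rw [QuotientGroup.eq_one_iff]
  exact mem_subgroupP_pow p ha

noncomputable instance VsubModule (p : ℕ) [NeZero p] {F : Type*} [Group F] (N : Subgroup F)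
    [N.Normal] : Module (ZMod p) (Additive (Vsub p N)) :=
  AddCommGroup.zmodModule (fun x => by
    apply Additive.toMul.injective
    rw [toMul_nsmul, toMul_zero]
    exact Vsub_pow_eq_one p N _)

section Magnus

variable (e p : ℕ) (H : Type) [Group H] [Fintype H] [DecidableEq H]

/-- cocycle value of the `j`-th generator. -/
noncomputable def ccy (ψ : FreeGroup (Fin e) →* H) (hψ : Function.Surjective ψ)
    (j : Fin e) (g : H) : Additive (Vsub p ψ.ker) :=
  Additive.ofMul (⟨QuotientGroup.mk' (subgroupP p ψ.ker)
      (Function.surjInv hψ (g * (ψ (FreeGroup.of j))⁻¹) * FreeGroup.of j *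
        (Function.surjInv hψ g)⁻¹),
    ⟨_, by
      simp only [SetLike.mem_coe, MonoidHom.mem_ker]
      simp [Function.surjInv_eq hψ, mul_assoc], rfl⟩⟩ : Vsub p ψ.ker)

/-- The "total Fox derivative" expression. -/
noncomputable def Lam [NeZero p] (ψ : FreeGroup (Fin e) →* H) (hψ : Function.Surjective ψ)
    (Ψp : FreeGroup (Fin e) →* (Fin e → Wr H (ZMod p)))
    (f : FreeGroup (Fin e)) (g : H) : Additive (Vsub p ψ.ker) :=
  ∑ k : Fin e, ∑ h : H, ((Ψp f k).2 h) • ccy e p H ψ hψ k (g * h⁻¹)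

variable [NeZero p] (ψ : FreeGroup (Fin e) →* H) (hψ : Function.Surjective ψ)
    (Ψp : FreeGroup (Fin e) →* (Fin e → Wr H (ZMod p)))

theorem Lam_one (g : H) : Lam e p H ψ hψ Ψp 1 g = 0 := by
  unfold Lam
  simp [Wr.snd_one]

theorem Lam_of
    (hΨp : ∀ j k, Ψp (FreeGroup.of j) k =
        (ψ (FreeGroup.of j), if k = j then Pi.single (1 : H) (1 : ZMod p) else 0))
    (j : Fin e) (g : H) : Lam e p H ψ hψ Ψp (FreeGroup.of j) g = ccy e p H ψ hψ j g := by
  unfold Lam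
  have h2 : ∀ k : Fin e, (Ψp (FreeGroup.of j) k).2
      = if k = j then (Pi.single (1 : H) (1 : ZMod p) : H → ZMod p) else 0 := by
    intro k; rw [hΨp j k]
  rw [Finset.sum_eq_single j]
  · rw [h2]
    rw [if_pos rfl]
    have h3 : ∀ h : H, ((Pi.single (1 : H) (1 : ZMod p) : H → ZMod p) h)
          • ccy e p H ψ hψ j (g * h⁻¹)
        = if h = 1 then ccy e p H ψ hψ j (g * h⁻¹) else 0 := by
      intro h
      rw [Pi.single_apply]
      by_cases hh : h = 1
      · rw [if_pos hh, if_pos hh, one_smul]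
      · rw [if_neg hh, if_neg hh, zero_smul]
    simp only [h3]
    rw [Finset.sum_ite_eq' Finset.univ (1 : H)]
    simp
  · intro k _ hk
    rw [h2, if_neg hk]
    simp
  · intro h; exact absurd (Finset.mem_univ j) h

theorem Lam_mul (hfirst : ∀ f k, (Ψp f k).1 = ψ f) (u v : FreeGroup (Fin e)) (g : H) :
    Lam e p H ψ hψ Ψp (u * v) g
      = Lam e p H ψ hψ Ψp u (g * (ψ v)⁻¹) + Lam e p H ψ hψ Ψp v g := by
  have hsnd : ∀ (k : Fin e) (h : H), (Ψp (u * v) k).2 h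
      = (Ψp u k).2 (h * (ψ v)⁻¹) + (Ψp v k).2 h := by
    intro k h
    have h1 : Ψp (u * v) k = Ψp u k * Ψp v k := by rw [map_mul]; rfl
    rw [h1, Wr.snd_mul, Pi.add_apply, hfirst]
  have hre : ∀ k : Fin e, (∑ h : H, ((Ψp u k).2 (h * (ψ v)⁻¹)) • ccy e p H ψ hψ k (g * h⁻¹))
      = ∑ h : H, ((Ψp u k).2 h) • ccy e p H ψ hψ k (g * (ψ v)⁻¹ * h⁻¹) := by
    intro k
    refine Fintype.sum_equiv (Equiv.mulRight (ψ v)⁻¹) _ _ fun h => ?_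
    simp only [Equiv.coe_mulRight]
    have e1 : g * (ψ v)⁻¹ * (h * (ψ v)⁻¹)⁻¹ = g * h⁻¹ := by group
    rw [e1]
  unfold Lam
  calc ∑ k : Fin e, ∑ h : H, ((Ψp (u * v) k).2 h) • ccy e p H ψ hψ k (g * h⁻¹)
      = ∑ k : Fin e, ((∑ h : H, ((Ψp u k).2 (h * (ψ v)⁻¹)) • ccy e p H ψ hψ k (g * h⁻¹))
          + ∑ h : H, ((Ψp v k).2 h) • ccy e p H ψ hψ k (g * h⁻¹)) := by
        refine Finset.sum_congr rfl fun k _ => ?_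
        refine Eq.trans ?_ Finset.sum_add_distrib
        refine Finset.sum_congr rfl fun h _ => ?_
        rw [hsnd, add_smul]
    _ = _ := by
        rw [Finset.sum_add_distrib]
        congr 1
        exact Finset.sum_congr rfl fun k _ => hre k

theorem Lam_inv (hfirst : ∀ f k, (Ψp f k).1 = ψ f) (u : FreeGroup (Fin e)) (g : H) :
    Lam e p H ψ hψ Ψp u⁻¹ g = -(Lam e p H ψ hψ Ψp u (g * ψ u)) := by
  have hsnd : ∀ (k : Fin e) (h : H), (Ψp u⁻¹ k).2 h = -((Ψp u k).2 (h * ψ u)) := by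
    intro k h
    have h1 : Ψp u⁻¹ k = (Ψp u k)⁻¹ := by rw [map_inv]; rfl
    rw [h1, Wr.snd_inv, hfirst]
  have hre : ∀ k : Fin e, (∑ h : H, ((Ψp u k).2 (h * ψ u)) • ccy e p H ψ hψ k (g * h⁻¹))
      = ∑ h : H, ((Ψp u k).2 h) • ccy e p H ψ hψ k (g * ψ u * h⁻¹) := by
    intro k
    refine Fintype.sum_equiv (Equiv.mulRight (ψ u)) _ _ fun h => ?_
    simp only [Equiv.coe_mulRight]
    have e1 : g * ψ u * (h * ψ u)⁻¹ = g * h⁻¹ := by group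
    rw [e1]
  unfold Lam
  calc ∑ k : Fin e, ∑ h : H, ((Ψp u⁻¹ k).2 h) • ccy e p H ψ hψ k (g * h⁻¹)
      = ∑ k : Fin e, ∑ h : H, -(((Ψp u k).2 (h * ψ u)) • ccy e p H ψ hψ k (g * h⁻¹)) := by
        refine Finset.sum_congr rfl fun k _ => Finset.sum_congr rfl fun h _ => ?_
        rw [hsnd, neg_smul]
    _ = -(∑ k : Fin e, ∑ h : H, ((Ψp u k).2 (h * ψ u)) • ccy e p H ψ hψ k (g * h⁻¹)) :=
        Eq.trans (Finset.sum_congr rfl fun k _ => Finset.sum_neg_distrib _)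
          (Finset.sum_neg_distrib _)
    _ = _ := by
        congr 1
        exact Finset.sum_congr rfl fun k _ => hre k

theorem key_eq
    (hΨp : ∀ j k, Ψp (FreeGroup.of j) k =
        (ψ (FreeGroup.of j), if k = j then Pi.single (1 : H) (1 : ZMod p) else 0))
    (hfirst : ∀ f k, (Ψp f k).1 = ψ f)
    (f : FreeGroup (Fin e)) (g : H) :
    QuotientGroup.mk' (subgroupP p ψ.ker)
        (Function.surjInv hψ (g * (ψ f)⁻¹) * f * (Function.surjInv hψ g)⁻¹)
      = (((Lam e p H ψ hψ Ψp f g).toMul : Vsub p ψ.ker) :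
          FreeGroup (Fin e) ⧸ subgroupP p ψ.ker) := by
  induction f using FreeGroup.induction_on generalizing g with
  | C1 =>
    rw [Lam_one]
    simp
  | of j =>
    rw [Lam_of e p H ψ hψ Ψp hΨp]
    rfl
  | inv_of j hj =>
    have h1 := hj (g * ψ (FreeGroup.of j))
    have harg : g * ψ (FreeGroup.of j) * (ψ (FreeGroup.of j))⁻¹ = g := by group
    rw [harg] at h1
    have h2 : (QuotientGroup.mk' (subgroupP p ψ.ker))
        (Function.surjInv hψ (g * ψ (FreeGroup.of j)) * (FreeGroup.of j : FreeGroup (Fin e))⁻¹ *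
          (Function.surjInv hψ g)⁻¹)
        = (((Lam e p H ψ hψ Ψp (FreeGroup.of j) (g * ψ (FreeGroup.of j))).toMul : Vsub p ψ.ker) :
            FreeGroup (Fin e) ⧸ subgroupP p ψ.ker)⁻¹ := by
      rw [← h1, ← map_inv]
      congr 1
      group
    have e2 : ψ ((FreeGroup.of j : FreeGroup (Fin e))⁻¹) = (ψ (FreeGroup.of j))⁻¹ := map_inv ψ _
    rw [e2, inv_inv]
    rw [Lam_inv e p H ψ hψ Ψp hfirst, toMul_neg]
    rw [h2]
    norm_cast
  | mul u v hu hv =>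
    rw [Lam_mul e p H ψ hψ Ψp hfirst, toMul_add, Subgroup.coe_mul]
    rw [← hu (g * (ψ v)⁻¹), ← hv g]
    rw [← map_mul]
    congr 1
    rw [map_mul, mul_inv_rev, ← mul_assoc]
    group

end Magnus


/-- `Ψ_p` (characterized by its generator values) induces an isomorphism
`F ⧸ M_p ≃ Ψ_p(F)`; the image `Ψ_p(M)` lies in the abelian normal subgroup
`((ℤ/p)ᴴ)^e` (i.e. all its first components are trivial); and the induced isomorphism is
`H`-equivariant: the conjugation action of `f ∈ F` on `Ψ_p(M)` depends only on `ψ f`. -/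
theorem stmt_13 (e p : ℕ) (hp : p.Prime) (H : Type) [Group H] [Finite H] [DecidableEq H]
    (ψ : FreeGroup (Fin e) →* H) (hψ : Function.Surjective ψ)
    (Ψp : FreeGroup (Fin e) →* (Fin e → Wr H (ZMod p)))
    (hΨp : ∀ j k, Ψp (FreeGroup.of j) k =
        (ψ (FreeGroup.of j), if k = j then Pi.single (1 : H) (1 : ZMod p) else 0)) :
    (∃ ι : (FreeGroup (Fin e) ⧸ subgroupP p ψ.ker) ≃* Ψp.range,
        ∀ w : FreeGroup (Fin e), (ι (QuotientGroup.mk w)).val = Ψp w) ∧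
    (∀ m ∈ ψ.ker, ∀ k, ((Ψp m) k).1 = 1) ∧
    (∀ f₁ f₂ : FreeGroup (Fin e), ψ f₁ = ψ f₂ →
      ∀ m ∈ ψ.ker, Ψp (f₁ * m * f₁⁻¹) = Ψp (f₂ * m * f₂⁻¹)) := by
  classical
  letI : Fintype H := Fintype.ofFinite H
  haveI : NeZero p := ⟨hp.ne_zero⟩
  -- the first component of `Ψp f` is always `ψ f`
  have hfirst : ∀ (f : FreeGroup (Fin e)) (k : Fin e), (Ψp f k).1 = ψ f := by
    intro f k
    have hcomp := FreeGroup.ext_hom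
      ((Wr.fstHom).comp ((Pi.evalMonoidHom (fun _ : Fin e => Wr H (ZMod p)) k).comp Ψp)) ψ
      (fun a => by
        rw [MonoidHom.comp_apply, MonoidHom.comp_apply, Pi.evalMonoidHom_apply, hΨp a k]
        rfl)
    exact DFunLike.congr_fun hcomp f
  -- images of kernel elements commute
  have hcommW : ∀ (a b : FreeGroup (Fin e)), a ∈ ψ.ker → b ∈ ψ.ker →
      Ψp a * Ψp b = Ψp b * Ψp a := by
    intro a b ha hb
    funext k
    rw [Pi.mul_apply, Pi.mul_apply]
    exact Wr.comm_of_fst ((hfirst a k).trans (MonoidHom.mem_ker.mp ha))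
      ((hfirst b k).trans (MonoidHom.mem_ker.mp hb))
  -- `subgroupP p ψ.ker ≤ Ψp.ker`
  have hsub_le : subgroupP p ψ.ker ≤ Ψp.ker := by
    rw [subgroupP, Subgroup.closure_le]
    rintro x (⟨a, ha, b, hb, rfl⟩ | ⟨a, ha, rfl⟩)
    · simp only [SetLike.mem_coe, MonoidHom.mem_ker]
      rw [map_commutatorElement]
      exact commutatorElement_eq_one_iff_mul_comm.mpr (hcommW a b ha hb)
    · simp only [SetLike.mem_coe, MonoidHom.mem_ker]
      rw [map_pow]
      funext k
      show ((Ψp a) k) ^ p = 1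
      rw [Wr.pow_of_fst ((hfirst a k).trans (MonoidHom.mem_ker.mp ha)), Wr.one_def]
      refine Wr.ext' rfl ?_
      funext g
      show p • ((Ψp a k).2 g) = 0
      rw [nsmul_eq_mul, ZMod.natCast_self, zero_mul]
  -- `Ψp.ker ≤ subgroupP p ψ.ker`
  have hker_le : Ψp.ker ≤ subgroupP p ψ.ker := by
    intro f hf
    have hf1 : Ψp f = 1 := MonoidHom.mem_ker.mp hf
    have hψf : ψ f = 1 := by
      rcases Nat.eq_zero_or_pos e with he | he
      · subst he
        have hall : ∀ w : FreeGroup (Fin 0), w = 1 := by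
          intro w
          induction w using FreeGroup.induction_on with
          | C1 => rfl
          | of x => exact x.elim0
          | inv_of x _ => exact x.elim0
          | mul u v hu hv => rw [hu, hv, one_mul]
        rw [hall f, map_one]
      · have h5 := hfirst f ⟨0, he⟩
        rw [hf1] at h5
        exact h5.symm
    have hkey := key_eq e p H ψ hψ Ψp hΨp hfirst f 1
    have hLam0 : Lam e p H ψ hψ Ψp f 1 = 0 := by
      unfold Lam
      have hz : ∀ (k : Fin e) (h : H), ((Ψp f k).2 h) = 0 := by
        intro k h; rw [hf1]; rfl
      simp [hz]
    rw [hLam0, hψf] at hkey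
    simp only [inv_one, mul_one, toMul_zero] at hkey
    have hmem : Function.surjInv hψ 1 * f * (Function.surjInv hψ 1)⁻¹ ∈ subgroupP p ψ.ker := by
      have h6 : ((Function.surjInv hψ 1 * f * (Function.surjInv hψ 1)⁻¹ : FreeGroup (Fin e)) :
          FreeGroup (Fin e) ⧸ subgroupP p ψ.ker) = 1 := by
        rw [← QuotientGroup.mk'_apply, hkey, OneMemClass.coe_one]
      exact (QuotientGroup.eq_one_iff _).mp h6
    have h7 := (subgroupP_normal p ψ.ker).conj_mem _ hmem (Function.surjInv hψ 1)⁻¹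
    simpa [mul_assoc] using h7
  have hkerEq : Ψp.ker = subgroupP p ψ.ker := le_antisymm hker_le hsub_le
  refine ⟨⟨(QuotientGroup.quotientMulEquivOfEq hkerEq.symm).trans
      (QuotientGroup.quotientKerEquivRange Ψp), fun w => ?_⟩,
    fun m hm k => (hfirst m k).trans (MonoidHom.mem_ker.mp hm),
    fun f₁ f₂ h12 m hm => ?_⟩
  · rw [MulEquiv.trans_apply, QuotientGroup.quotientMulEquivOfEq_mk]
    rfl
  · have hn : f₁⁻¹ * f₂ ∈ ψ.ker := by
      rw [MonoidHom.mem_ker, map_mul, map_inv, h12, inv_mul_cancel]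
    have hdecomp : f₂ * m * f₂⁻¹ = f₁ * ((f₁⁻¹ * f₂) * m * (f₁⁻¹ * f₂)⁻¹) * f₁⁻¹ := by group
    have hconj : Ψp ((f₁⁻¹ * f₂) * m * (f₁⁻¹ * f₂)⁻¹) = Ψp m := by
      rw [map_mul, map_mul, map_inv]
      rw [hcommW _ _ hn hm]
      rw [mul_assoc, mul_inv_cancel, mul_one]
    calc Ψp (f₁ * m * f₁⁻¹) = Ψp f₁ * Ψp m * (Ψp f₁)⁻¹ := by
          rw [map_mul, map_mul, map_inv]
      _ = Ψp (f₁ * ((f₁⁻¹ * f₂) * m * (f₁⁻¹ * f₂)⁻¹) * f₁⁻¹) := by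
          symm
          rw [map_mul, map_mul, map_inv, hconj]
      _ = Ψp (f₂ * m * f₂⁻¹) := by rw [← hdecomp]
end

section
/- Let β and γ be normalized 2-cocycles of H with values in V, let D be a group with a surjective homomorphism π: D → E_β, and let r ∈ ℤ_p. For a normalized 2-cocycle δ, let P_δ denote the fiber product of D and E_δ over H with respect to ε_β ∘ π and ε_δ. Then there is a group isomorphism P_γ → P_{rβ+γ} that commutes with the natural projections of both groups onto D. -/
/-- A right action of the group `H` on the additive group `V` by additive maps,
written `v^h = ρ.act h v`. Together with a `ZMod p`-module structure on `V` this is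
exactly a right `ℤ_p[H]`-module structure. -/
structure RAction (H V : Type) [Group H] [AddCommGroup V] where
  act : H → V →+ V
  act_one : act 1 = AddMonoidHom.id V
  act_mul : ∀ g h : H, act (g * h) = (act h).comp (act g)

namespace RAction

variable {H V : Type} [Group H] [AddCommGroup V]

theorem act_act (ρ : RAction H V) (g h : H) (v : V) :
    ρ.act h (ρ.act g v) = ρ.act (g * h) v := by rw [ρ.act_mul]; rfl

theorem act_one_apply (ρ : RAction H V) (v : V) : ρ.act 1 v = v := by rw [ρ.act_one]; rfl

theorem act_smul {p : ℕ} [Module (ZMod p) V] (ρ : RAction H V) (h : H) (r : ZMod p) (v : V) :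
    ρ.act h (r • v) = r • ρ.act h v := by
  obtain ⟨k, rfl⟩ := ZMod.intCast_surjective r
  exact map_intCast_smul (ρ.act h) (ZMod p) (ZMod p) k v

/-- The diagonal right action on `V × V`. -/
def prodSelf (ρ : RAction H V) : RAction H (V × V) where
  act h := (ρ.act h).prodMap (ρ.act h)
  act_one := by ext x <;> simp [ρ.act_one]
  act_mul g h := by ext x <;> simp [ρ.act_mul]

end RAction

/-- A normalized 2-cocycle of `H` with values in `V` (w.r.t. the right action `ρ`):
`γ(a,b)^c + γ(ab,c) = γ(b,c) + γ(a,bc)` and `γ(1,·) = γ(·,1) = 0`. -/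
structure Cocycle {H V : Type} [Group H] [AddCommGroup V] (ρ : RAction H V) where
  f : H → H → V
  cocyc : ∀ a b c : H, ρ.act c (f a b) + f (a * b) c = f b c + f a (b * c)
  one_left : ∀ h : H, f 1 h = 0
  one_right : ∀ h : H, f h 1 = 0

namespace Cocycle

variable {H V : Type} [Group H] [AddCommGroup V] {ρ : RAction H V}

/-- The sum of two normalized 2-cocycles. -/
def add (β γ : Cocycle ρ) : Cocycle ρ where
  f a b := β.f a b + γ.f a b
  cocyc a b c := by
    calc ρ.act c (β.f a b + γ.f a b) + (β.f (a * b) c + γ.f (a * b) c)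
        = (ρ.act c (β.f a b) + β.f (a * b) c) + (ρ.act c (γ.f a b) + γ.f (a * b) c) := by
          rw [map_add]; abel
      _ = (β.f b c + β.f a (b * c)) + (γ.f b c + γ.f a (b * c)) := by
          rw [β.cocyc, γ.cocyc]
      _ = (β.f b c + γ.f b c) + (β.f a (b * c) + γ.f a (b * c)) := by abel
  one_left h := by show β.f 1 h + γ.f 1 h = 0; rw [β.one_left, γ.one_left, add_zero]
  one_right h := by show β.f h 1 + γ.f h 1 = 0; rw [β.one_right, γ.one_right, add_zero]

/-- A scalar multiple of a normalized 2-cocycle. -/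
def smul {p : ℕ} [Module (ZMod p) V] (r : ZMod p) (β : Cocycle ρ) : Cocycle ρ where
  f a b := r • β.f a b
  cocyc a b c := by
    rw [ρ.act_smul, ← smul_add, ← smul_add, β.cocyc]
  one_left h := by show r • β.f 1 h = 0; rw [β.one_left, smul_zero]
  one_right h := by show r • β.f h 1 = 0; rw [β.one_right, smul_zero]

/-- The pair of two normalized 2-cocycles, with values in `V × V` with the diagonal action. -/
def pair (β γ : Cocycle ρ) : Cocycle ρ.prodSelf where
  f a b := (β.f a b, γ.f a b)
  cocyc a b c := by
    refine Prod.ext ?_ ?_ <;>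
      simp [RAction.prodSelf, β.cocyc, γ.cocyc]
  one_left h := by show (β.f 1 h, γ.f 1 h) = 0; rw [β.one_left, γ.one_left]; rfl
  one_right h := by show (β.f h 1, γ.f h 1) = 0; rw [β.one_right, γ.one_right]; rfl

end Cocycle

/-- The extension of `H` with `V` determined by a normalized 2-cocycle `γ`: the underlying set
is `H × V` with multiplication `(g,v)·(h,w) = (gh, v^h + w + γ(g,h))`. -/
def GrpExt {H V : Type} [Group H] [AddCommGroup V] (ρ : RAction H V) (γ : Cocycle ρ) : Type :=
  H × V

namespace GrpExt

variable {H V : Type} [Group H] [AddCommGroup V] {ρ : RAction H V} {γ : Cocycle ρ}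

instance : Mul (GrpExt ρ γ) :=
  ⟨fun x y => ⟨x.1 * y.1, ρ.act y.1 x.2 + y.2 + γ.f x.1 y.1⟩⟩
instance : One (GrpExt ρ γ) := ⟨⟨1, 0⟩⟩
instance : Inv (GrpExt ρ γ) :=
  ⟨fun x => ⟨x.1⁻¹, ρ.act x.1⁻¹ (-x.2 - γ.f x.1⁻¹ x.1)⟩⟩

theorem mul_def (x y : GrpExt ρ γ) :
    x * y = ⟨x.1 * y.1, ρ.act y.1 x.2 + y.2 + γ.f x.1 y.1⟩ := rfl

theorem ext' {x y : GrpExt ρ γ} (h1 : x.1 = y.1) (h2 : x.2 = y.2) : x = y := Prod.ext h1 h2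

instance : Group (GrpExt ρ γ) where
  mul := (· * ·)
  one := 1
  inv := (·⁻¹)
  mul_assoc x y z := by
    refine ext' (mul_assoc _ _ _) ?_
    show ρ.act z.1 (ρ.act y.1 x.2 + y.2 + γ.f x.1 y.1) + z.2 + γ.f (x.1 * y.1) z.1
       = ρ.act (y.1 * z.1) x.2 + (ρ.act z.1 y.2 + z.2 + γ.f y.1 z.1) + γ.f x.1 (y.1 * z.1)
    have hc := γ.cocyc x.1 y.1 z.1
    simp only [map_add, ρ.act_act]
    calc ρ.act (y.1 * z.1) x.2 + ρ.act z.1 y.2 + ρ.act z.1 (γ.f x.1 y.1) + z.2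
            + γ.f (x.1 * y.1) z.1
        = ρ.act (y.1 * z.1) x.2 + ρ.act z.1 y.2 + z.2
            + (ρ.act z.1 (γ.f x.1 y.1) + γ.f (x.1 * y.1) z.1) := by abel
      _ = ρ.act (y.1 * z.1) x.2 + ρ.act z.1 y.2 + z.2
            + (γ.f y.1 z.1 + γ.f x.1 (y.1 * z.1)) := by rw [hc]
      _ = ρ.act (y.1 * z.1) x.2 + (ρ.act z.1 y.2 + z.2 + γ.f y.1 z.1)
            + γ.f x.1 (y.1 * z.1) := by abel
  one_mul x := by
    refine ext' (one_mul _) ?_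
    show ρ.act x.1 (0 : V) + x.2 + γ.f 1 x.1 = x.2
    rw [map_zero, γ.one_left, zero_add, add_zero]
  mul_one x := by
    refine ext' (mul_one _) ?_
    show ρ.act 1 x.2 + 0 + γ.f x.1 1 = x.2
    rw [ρ.act_one_apply, γ.one_right, add_zero, add_zero]
  inv_mul_cancel x := by
    refine ext' (inv_mul_cancel _) ?_
    show ρ.act x.1 (ρ.act x.1⁻¹ (-x.2 - γ.f x.1⁻¹ x.1)) + x.2 + γ.f x.1⁻¹ x.1 = 0
    rw [ρ.act_act, inv_mul_cancel, ρ.act_one_apply]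
    abel

end GrpExt

/-- The natural epimorphism `ε_γ : E_γ → H`, `(h, v) ↦ h`. -/
def epsHom {H V : Type} [Group H] [AddCommGroup V] (ρ : RAction H V) (γ : Cocycle ρ) :
    GrpExt ρ γ →* H where
  toFun x := x.1
  map_one' := rfl
  map_mul' _ _ := rfl

/-- The fiber product of two groups over `H`: the subgroup of the direct product consisting
of pairs whose components have equal images in `H`. -/
def fiber2 {A B H : Type} [Group A] [Group B] [Group H] (f : A →* H) (g : B →* H) :
    Subgroup (A × B) where
  carrier := {z | f z.1 = g z.2}
  one_mem' := by simp
  mul_mem' := by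
    intro a b ha hb
    simp only [Set.mem_setOf_eq, Prod.fst_mul, Prod.snd_mul, map_mul] at *
    rw [ha, hb]
  inv_mem' := by
    intro a ha
    simp only [Set.mem_setOf_eq, Prod.fst_inv, Prod.snd_inv, map_inv] at *
    rw [ha]

/-- Let `β, γ` be normalized 2-cocycles of `H` with values in the `ℤ_p[H]`-module `V`, let
`π : D → E_β` be a surjection, and `r ∈ ℤ_p`. Writing `P_δ` for the fiber product of `D`
and `E_δ` over `H` (w.r.t. `ε_β ∘ π` and `ε_δ`), there is a group isomorphism
`P_γ ≃ P_{rβ+γ}` commuting with the natural projections onto `D`. -/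
theorem stmt_17 (p : ℕ) (hp : p.Prime) (H V : Type) [Group H] [Finite H]
    [AddCommGroup V] [Module (ZMod p) V] (ρ : RAction H V) (β γ : Cocycle ρ)
    (D : Type) [Group D] (π : D →* GrpExt ρ β) (hπ : Function.Surjective π) (r : ZMod p) :
    ∃ φ : fiber2 ((epsHom ρ β).comp π) (epsHom ρ γ) ≃*
          fiber2 ((epsHom ρ β).comp π) (epsHom ρ ((Cocycle.smul r β).add γ)),
      ∀ z : fiber2 ((epsHom ρ β).comp π) (epsHom ρ γ), (φ z).val.1 = z.val.1 := by
  refine ⟨{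
    toFun := fun z => ⟨(z.val.1, (z.val.2.1, z.val.2.2 + r • (π z.val.1).2)), z.prop⟩
    invFun := fun z => ⟨(z.val.1, (z.val.2.1, z.val.2.2 - r • (π z.val.1).2)), z.prop⟩
    left_inv := fun z => by
      apply Subtype.ext
      refine Prod.ext rfl (Prod.ext rfl ?_)
      simp
    right_inv := fun z => by
      apply Subtype.ext
      refine Prod.ext rfl (Prod.ext rfl ?_)
      simp
    map_mul' := fun x y => by
      apply Subtype.ext
      refine Prod.ext rfl (Prod.ext rfl ?_)
      have hx : (π x.val.1).1 = x.val.2.1 := x.prop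
      have hy : (π y.val.1).1 = y.val.2.1 := y.prop
      show (x.val.2 * y.val.2).2 + r • (π (x.val.1 * y.val.1)).2
          = ρ.act y.val.2.1 (x.val.2.2 + r • (π x.val.1).2) + (y.val.2.2 + r • (π y.val.1).2)
            + (r • β.f x.val.2.1 y.val.2.1 + γ.f x.val.2.1 y.val.2.1)
      rw [map_mul]
      show ρ.act y.val.2.1 x.val.2.2 + y.val.2.2 + γ.f x.val.2.1 y.val.2.1
          + r • (ρ.act (π y.val.1).1 (π x.val.1).2 + (π y.val.1).2
            + β.f (π x.val.1).1 (π y.val.1).1) = _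
      rw [hx, hy, map_add, ρ.act_smul, smul_add, smul_add]
      abel }, fun z => rfl⟩
end

section
/- Let H be a finite group, p a prime, V a simple ℤ_p[H]-module, and π: E → H a surjective homomorphism of finite groups whose kernel K is abelian of exponent dividing p and, as ℤ_p[H]-module via conjugation, is V-homogeneous. Then there exist an integer n ≥ 0, normalized 2-cocycles γ_1, …, γ_n ∈ Z²(H,V) whose classes in H²(H,V) are ℤ_p-linearly independent, a finite group S with a surjective homomorphism π_S: S → H that admits a homomorphic section and whose kernel is abelian of exponent dividing p and V-homogeneous as ℤ_p[H]-module via conjugation, and an injective homomorphism ι: E → S × E_{γ_1} × … × E_{γ_n} whose image is exactly the fiber product over H with respect to π_S, ε_{γ_1}, …, ε_{γ_n}; in particular π equals the composition of ι with the natural projection of this fiber product onto H. -/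
/-- The kernel of `π : E → H` is, via the conjugation action, a `V`-homogeneous module:
it admits an additive bijection with a finite direct sum `V^m` of copies of `V` that is
`H`-equivariant (conjugation by `g` corresponds to the action of `π g`). -/
def IsVHomog {H V E : Type} [Group H] [AddCommGroup V] [Group E]
    (ρ : RAction H V) (π : E →* H) : Prop :=
  ∃ (m : ℕ) (φ : π.ker ≃ (Fin m → V)),
    (∀ a b : π.ker, φ (a * b) = φ a + φ b) ∧
    ∀ (g : E) (k : π.ker),
      φ ⟨g⁻¹ * (k : E) * g, by
          simpa using (MonoidHom.normal_ker π).conj_mem (k : E) k.2 g⁻¹⟩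
        = fun i => ρ.act (π g) (φ k i)

/-- `f` is a 2-coboundary: `f(g,h) = λ(g)^h + λ(h) - λ(gh)` for some `λ : H → V` with
`λ(1) = 0`. -/
def IsCoboundary {H V : Type} [Group H] [AddCommGroup V]
    (ρ : RAction H V) (f : H → H → V) : Prop :=
  ∃ lam : H → V, lam 1 = 0 ∧ ∀ g h : H, f g h = ρ.act h (lam g) + lam h - lam (g * h)

/-- A finite split extension of `H` with a `V`-homogeneous kernel: a finite group `S` with
a surjection `πS : S → H` admitting a homomorphic section, whose kernel is abelian of
exponent dividing `p` and `V`-homogeneous via conjugation. -/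
structure SplitVHomogData (p : ℕ) (H V : Type) [Group H] [AddCommGroup V]
    (ρ : RAction H V) where
  S : Type
  [grp : Group S]
  [fin : Finite S]
  πS : S →* H
  surj : Function.Surjective πS
  sec : ∃ s : H →* S, πS.comp s = MonoidHom.id H
  ker_comm : ∀ a b : πS.ker, a * b = b * a
  ker_exp : ∀ k : πS.ker, k ^ p = 1
  homog : IsVHomog ρ πS

attribute [instance] SplitVHomogData.grp SplitVHomogData.fin

namespace Stmt18Aux

open RAction

variable {H V : Type} [Group H] [AddCommGroup V]

/-- Pointwise action on tuples. -/
def actPi (ρ : RAction H V) (q : ℕ) : RAction H (Fin q → V) where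
  act h :=
    { toFun := fun v j => ρ.act h (v j)
      map_zero' := by funext j; simp
      map_add' := by intro a b; funext j; simp }
  act_one := AddMonoidHom.ext fun v => funext fun j => ρ.act_one_apply (v j)
  act_mul g h := AddMonoidHom.ext fun v => funext fun j =>
    (ρ.act_act g h (v j)).symm

theorem actPi_apply (ρ : RAction H V) (q : ℕ) (h : H) (v : Fin q → V) (j : Fin q) :
    (actPi ρ q).act h v j = ρ.act h (v j) := rfl

/-- The coboundaries form a `ZMod p`-submodule of `H → H → V`. -/
def cob (p : ℕ) [Module (ZMod p) V] (ρ : RAction H V) : Submodule (ZMod p) (H → H → V) where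
  carrier := {f | IsCoboundary ρ f}
  zero_mem' := ⟨fun _ => 0, rfl, fun g h => by simp⟩
  add_mem' := by
    rintro f f' ⟨l, hl1, hl⟩ ⟨l', hl'1, hl'⟩
    refine ⟨l + l', by simp [hl1, hl'1], fun g h => ?_⟩
    simp only [Pi.add_apply, hl g h, hl' g h, map_add]
    abel
  smul_mem' := by
    rintro r f ⟨l, hl1, hl⟩
    refine ⟨r • l, by simp [hl1], fun g h => ?_⟩
    simp only [Pi.smul_apply, hl g h, RAction.act_smul, smul_add, smul_sub]

theorem mem_cob (p : ℕ) [Module (ZMod p) V] (ρ : RAction H V) (f : H → H → V) :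
    f ∈ cob p ρ ↔ IsCoboundary ρ f := Iff.rfl

theorem GrpExt.inv_def {ρ : RAction H V} {γ : Cocycle ρ} (x : GrpExt ρ γ) :
    x⁻¹ = ⟨x.1⁻¹, ρ.act x.1⁻¹ (-x.2 - γ.f x.1⁻¹ x.1)⟩ := rfl

end Stmt18Aux

/-- **Structure of extensions with a homogeneous module.** Every finite extension
`π : E → H` with `V`-homogeneous kernel (with `V` a simple `ℤ_p[H]`-module) is a fiber
product, over `H`, of a split extension `S` with `V`-homogeneous kernel and extensions
`E_{γ_1}, …, E_{γ_n}` for cocycles `γ_i` whose cohomology classes are `ℤ_p`-linearly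
independent. -/
theorem stmt_18 (p : ℕ) (hp : p.Prime) (H V : Type) [Group H] [Finite H]
    [AddCommGroup V] [Module (ZMod p) V] (ρ : RAction H V)
    (hsimple : (∃ v : V, v ≠ 0) ∧
      ∀ W : Submodule (ZMod p) V, (∀ h : H, ∀ w ∈ W, ρ.act h w ∈ W) → W = ⊥ ∨ W = ⊤)
    (E : Type) [Group E] [Finite E] (π : E →* H) (hπ : Function.Surjective π)
    (hcomm : ∀ a b : π.ker, a * b = b * a) (hexp : ∀ k : π.ker, k ^ p = 1)
    (hhom : IsVHomog ρ π) :
    ∃ (n : ℕ) (γ : Fin n → Cocycle ρ),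
      (∀ c : Fin n → ZMod p,
          IsCoboundary ρ (fun a b => ∑ i, c i • (γ i).f a b) → c = 0) ∧
      ∃ T : SplitVHomogData p H V ρ,
        ∃ ι : E →* T.S × (∀ i, GrpExt ρ (γ i)),
          Function.Injective ι ∧
          Set.range ι
            = {z : T.S × (∀ i, GrpExt ρ (γ i)) | ∀ i, epsHom ρ (γ i) (z.2 i) = T.πS z.1} ∧
          ∀ x : E, π x = T.πS (ι x).1 := by
  classical
  haveI := Fact.mk hp
  clear hsimple
  obtain ⟨m, φ, φadd, φconj⟩ := hhom
  obtain ⟨σ0, hσ0⟩ := hπ.hasRightInverse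
  set σ : H → E := fun h => if h = 1 then 1 else σ0 h with hσdef
  have hσ : ∀ h, π (σ h) = h := by
    intro h
    by_cases hh : h = 1
    · simp [hσdef, hh]
    · simp [hσdef, hh, hσ0 h]
  have hσ1 : σ 1 = 1 := by simp [hσdef]
  have φmul : ∀ (a b : E) (ha : a ∈ π.ker) (hb : b ∈ π.ker),
      φ ⟨a * b, mul_mem ha hb⟩ = φ ⟨a, ha⟩ + φ ⟨b, hb⟩ := fun a b ha hb => φadd ⟨a, ha⟩ ⟨b, hb⟩
  have φ1 : φ ⟨1, one_mem _⟩ = 0 := by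
    have h2 := φmul 1 1 (one_mem _) (one_mem _)
    rw [show (⟨1 * 1, mul_mem (one_mem _) (one_mem _)⟩ : π.ker) = ⟨1, one_mem _⟩ from
      Subtype.ext (one_mul 1)] at h2
    exact (right_eq_add.mp h2)
  have φswap : ∀ (a b : E) (ha : a ∈ π.ker) (hb : b ∈ π.ker),
      φ ⟨a, ha⟩ + φ ⟨b, hb⟩ = φ ⟨b * a, mul_mem hb ha⟩ := by
    intro a b ha hb
    rw [φmul b a hb ha, add_comm]
  have hkv : ∀ x : E, (σ (π x))⁻¹ * x ∈ π.ker := by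
    intro x
    rw [MonoidHom.mem_ker, map_mul, map_inv, hσ, inv_mul_cancel]
  have hkw : ∀ g h : H, (σ (g * h))⁻¹ * (σ g * σ h) ∈ π.ker := by
    intro g h
    rw [MonoidHom.mem_ker, map_mul, map_inv, map_mul, hσ, hσ, hσ, inv_mul_cancel]
  set v : E → Fin m → V := fun x => φ ⟨(σ (π x))⁻¹ * x, hkv x⟩ with hvdef
  set βf : H → H → Fin m → V := fun g h => φ ⟨(σ (g * h))⁻¹ * (σ g * σ h), hkw g h⟩ with hβdef
  have conjmem : ∀ (g x : E), x ∈ π.ker → g⁻¹ * x * g ∈ π.ker := by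
    intro g x hx
    rw [MonoidHom.mem_ker] at hx ⊢
    rw [map_mul, map_mul, map_inv, hx, mul_one, inv_mul_cancel]
  have φconj' : ∀ (g a : E) (ha : a ∈ π.ker),
      φ ⟨g⁻¹ * a * g, conjmem g a ha⟩ = fun i => ρ.act (π g) (φ ⟨a, ha⟩ i) :=
    fun g a ha => φconj g ⟨a, ha⟩
  have hβ1l : ∀ h : H, βf 1 h = 0 := by
    intro h
    have hval : (⟨(σ (1 * h))⁻¹ * (σ 1 * σ h), hkw 1 h⟩ : π.ker) = ⟨1, one_mem _⟩ := by
      apply Subtype.ext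
      show (σ (1 * h))⁻¹ * (σ 1 * σ h) = 1
      rw [one_mul, hσ1, one_mul, inv_mul_cancel]
    calc βf 1 h = φ ⟨1, one_mem _⟩ := congrArg φ hval
      _ = 0 := φ1
  have hβ1r : ∀ h : H, βf h 1 = 0 := by
    intro h
    have hval : (⟨(σ (h * 1))⁻¹ * (σ h * σ 1), hkw h 1⟩ : π.ker) = ⟨1, one_mem _⟩ := by
      apply Subtype.ext
      show (σ (h * 1))⁻¹ * (σ h * σ 1) = 1
      rw [mul_one, hσ1, mul_one, inv_mul_cancel]
    calc βf h 1 = φ ⟨1, one_mem _⟩ := congrArg φ hval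
      _ = 0 := φ1
  have hβcoc : ∀ a b c : H,
      (fun i => ρ.act c (βf a b i)) + βf (a * b) c = βf b c + βf a (b * c) := by
    intro a b c
    have h1 : (fun i => ρ.act c (βf a b i)) =
        φ ⟨(σ c)⁻¹ * ((σ (a * b))⁻¹ * (σ a * σ b)) * σ c, conjmem _ _ (hkw a b)⟩ := by
      have h2 := φconj' (σ c) _ (hkw a b)
      rw [hσ] at h2
      exact h2.symm
    rw [h1]
    show φ ⟨(σ c)⁻¹ * ((σ (a * b))⁻¹ * (σ a * σ b)) * σ c, conjmem _ _ (hkw a b)⟩ +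
        φ ⟨(σ (a * b * c))⁻¹ * (σ (a * b) * σ c), hkw (a * b) c⟩ =
        φ ⟨(σ (b * c))⁻¹ * (σ b * σ c), hkw b c⟩ +
        φ ⟨(σ (a * (b * c)))⁻¹ * (σ a * σ (b * c)), hkw a (b * c)⟩
    rw [φswap, φswap]
    apply congrArg φ
    apply Subtype.ext
    show (σ (a * b * c))⁻¹ * (σ (a * b) * σ c) *
        ((σ c)⁻¹ * ((σ (a * b))⁻¹ * (σ a * σ b)) * σ c) =
      (σ (a * (b * c)))⁻¹ * (σ a * σ (b * c)) * ((σ (b * c))⁻¹ * (σ b * σ c))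
    rw [mul_assoc a b c]
    group
  have hKL : ∀ x y : E,
      v (x * y) = (fun i => ρ.act (π y) (v x i)) + v y + βf (π x) (π y) := by
    intro x y
    have h1 : (fun i => ρ.act (π y) (v x i)) =
        φ ⟨(σ (π y))⁻¹ * ((σ (π x))⁻¹ * x) * σ (π y), conjmem _ _ (hkv x)⟩ := by
      have h2 := φconj' (σ (π y)) _ (hkv x)
      rw [hσ] at h2
      exact h2.symm
    rw [h1]
    show φ ⟨(σ (π (x * y)))⁻¹ * (x * y), hkv (x * y)⟩ =
        φ ⟨(σ (π y))⁻¹ * ((σ (π x))⁻¹ * x) * σ (π y), conjmem _ _ (hkv x)⟩ +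
        φ ⟨(σ (π y))⁻¹ * y, hkv y⟩ +
        φ ⟨(σ (π x * π y))⁻¹ * (σ (π x) * σ (π y)), hkw (π x) (π y)⟩
    rw [← φmul ((σ (π y))⁻¹ * ((σ (π x))⁻¹ * x) * σ (π y)) ((σ (π y))⁻¹ * y)
      (conjmem _ _ (hkv x)) (hkv y), φswap]
    apply congrArg φ
    apply Subtype.ext
    show (σ (π (x * y)))⁻¹ * (x * y) =
      (σ (π x * π y))⁻¹ * (σ (π x) * σ (π y)) *
        ((σ (π y))⁻¹ * ((σ (π x))⁻¹ * x) * σ (π y) * ((σ (π y))⁻¹ * y))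
    rw [map_mul]
    group
  -- linear algebra: split off the coboundary part
  let Cb : Submodule (ZMod p) (H → H → V) := Stmt18Aux.cob p ρ
  let ℓ : (Fin m → ZMod p) →ₗ[ZMod p] (H → H → V) :=
    { toFun := fun c g h => ∑ j, c j • βf g h j
      map_add' := by
        intro c c'
        funext g h
        show ∑ j, (c j + c' j) • βf g h j = _
        simp [add_smul, Finset.sum_add_distrib]
      map_smul' := by
        intro r c
        funext g h
        show ∑ j, (r * c j) • βf g h j = r • ∑ j, c j • βf g h j
        rw [Finset.smul_sum]
        exact Finset.sum_congr rfl fun j _ => mul_smul r (c j) (βf g h j) }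
  let L : (Fin m → ZMod p) →ₗ[ZMod p] ((H → H → V) ⧸ Cb) := Cb.mkQ.comp ℓ
  let N : Submodule (ZMod p) (Fin m → ZMod p) := LinearMap.ker L
  obtain ⟨C, hNC⟩ := Submodule.exists_isCompl N
  let k : ℕ := Module.finrank (ZMod p) ↥N
  let n : ℕ := Module.finrank (ZMod p) ↥C
  let bN : Module.Basis (Fin k) (ZMod p) ↥N := Module.finBasis (ZMod p) ↥N
  let bC : Module.Basis (Fin n) (ZMod p) ↥C := Module.finBasis (ZMod p) ↥C
  let b : Module.Basis (Fin n ⊕ Fin k) (ZMod p) (Fin m → ZMod p) :=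
    (bC.prod bN).map (Submodule.prodEquivOfIsCompl C N hNC.symm)
  have hbinl : ∀ i, b (Sum.inl i) = (bC i : Fin m → ZMod p) := by
    intro i
    show Submodule.prodEquivOfIsCompl C N hNC.symm ((bC.prod bN) (Sum.inl i)) = _
    rw [Submodule.coe_prodEquivOfIsCompl', Module.Basis.prod_apply_inl_fst, Module.Basis.prod_apply_inl_snd]
    simp
  have hbinr : ∀ j, b (Sum.inr j) = (bN j : Fin m → ZMod p) := by
    intro j
    show Submodule.prodEquivOfIsCompl C N hNC.symm ((bC.prod bN) (Sum.inr j)) = _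
    rw [Submodule.coe_prodEquivOfIsCompl', Module.Basis.prod_apply_inr_fst, Module.Basis.prod_apply_inr_snd]
    simp
  let A : (Fin n ⊕ Fin k) → Fin m → ZMod p := fun s => b s
  let Bm : Fin m → (Fin n ⊕ Fin k) → ZMod p :=
    fun j s => b.repr (fun j' => if j = j' then 1 else 0) s
  have hE2 : ∀ j j' : Fin m, (∑ s, Bm j s * A s j') = if j = j' then 1 else 0 := by
    intro j j'
    have h := congrFun (b.sum_repr (fun j' => if j = j' then (1 : ZMod p) else 0)) j'
    rw [Finset.sum_apply] at h
    calc (∑ s, Bm j s * A s j')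
        = ∑ s, (b.repr (fun j' => if j = j' then (1 : ZMod p) else 0) s • b s) j' := by
          exact Finset.sum_congr rfl fun s _ => rfl
      _ = if j = j' then 1 else 0 := h
  have hE1 : ∀ s s' : Fin n ⊕ Fin k, (∑ j, A s j * Bm j s') = if s = s' then 1 else 0 := by
    intro s s'
    have h1 : (∑ j, A s j * Bm j s') = b.repr (b s) s' := by
      conv_rhs => rw [pi_eq_sum_univ (b s)]
      rw [map_sum, Finsupp.coe_finset_sum, Finset.sum_apply]
      refine Finset.sum_congr rfl fun j _ => ?_
      rw [map_smul, Finsupp.smul_apply, smul_eq_mul]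
    rw [h1, Module.Basis.repr_self, Finsupp.single_apply]
  let Amap : (Fin m → V) → ((Fin n ⊕ Fin k) → V) := fun w s => ∑ j, A s j • w j
  let Bmap : ((Fin n ⊕ Fin k) → V) → (Fin m → V) := fun u j => ∑ s, Bm j s • u s
  have hBA : ∀ w : Fin m → V, Bmap (Amap w) = w := by
    intro w
    funext j
    show ∑ s, Bm j s • (∑ j', A s j' • w j') = w j
    calc ∑ s, Bm j s • (∑ j', A s j' • w j')
        = ∑ s, ∑ j', (Bm j s * A s j') • w j' := by
          refine Finset.sum_congr rfl fun s _ => ?_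
          rw [Finset.smul_sum]
          exact Finset.sum_congr rfl fun j' _ => (mul_smul _ _ _).symm
      _ = ∑ j', (∑ s, Bm j s * A s j') • w j' := by
          rw [Finset.sum_comm]
          exact Finset.sum_congr rfl fun j' _ => (Finset.sum_smul).symm
      _ = ∑ j', (if j = j' then (1 : ZMod p) else 0) • w j' := by
          exact Finset.sum_congr rfl fun j' _ => by rw [hE2]
      _ = w j := by simp [ite_smul]
  have hAB : ∀ u : (Fin n ⊕ Fin k) → V, Amap (Bmap u) = u := by
    intro u
    funext s
    show ∑ j, A s j • (∑ s', Bm j s' • u s') = u s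
    calc ∑ j, A s j • (∑ s', Bm j s' • u s')
        = ∑ j, ∑ s', (A s j * Bm j s') • u s' := by
          refine Finset.sum_congr rfl fun j _ => ?_
          rw [Finset.smul_sum]
          exact Finset.sum_congr rfl fun s' _ => (mul_smul _ _ _).symm
      _ = ∑ s', (∑ j, A s j * Bm j s') • u s' := by
          rw [Finset.sum_comm]
          exact Finset.sum_congr rfl fun s' _ => (Finset.sum_smul).symm
      _ = ∑ s', (if s = s' then (1 : ZMod p) else 0) • u s' := by
          exact Finset.sum_congr rfl fun s' _ => by rw [hE1]
      _ = u s := by simp [ite_smul]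
  -- the transformed cocycles
  let Γ : H → H → (Fin n ⊕ Fin k) → V := fun g h => Amap (βf g h)
  have hΓ1l : ∀ (h : H) (s), Γ 1 h s = 0 := by
    intro h s
    show ∑ j, A s j • βf 1 h j = 0
    rw [hβ1l]
    simp
  have hΓ1r : ∀ (h : H) (s), Γ h 1 s = 0 := by
    intro h s
    show ∑ j, A s j • βf h 1 j = 0
    rw [hβ1r]
    simp
  have hΓcoc : ∀ (a b c : H) (s),
      ρ.act c (Γ a b s) + Γ (a * b) c s = Γ b c s + Γ a (b * c) s := by
    intro a b c s
    show ρ.act c (∑ j, A s j • βf a b j) + ∑ j, A s j • βf (a * b) c j =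
      (∑ j, A s j • βf b c j) + ∑ j, A s j • βf a (b * c) j
    rw [map_sum]
    calc (∑ j, ρ.act c (A s j • βf a b j)) + ∑ j, A s j • βf (a * b) c j
        = ∑ j, A s j • (ρ.act c (βf a b j) + βf (a * b) c j) := by
          rw [← Finset.sum_add_distrib]
          refine Finset.sum_congr rfl fun j _ => ?_
          rw [ρ.act_smul, smul_add]
      _ = ∑ j, A s j • (βf b c j + βf a (b * c) j) := by
          refine Finset.sum_congr rfl fun j _ => ?_
          have h2 := congrFun (hβcoc a b c) j
          simp only [Pi.add_apply] at h2
          rw [h2]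
      _ = (∑ j, A s j • βf b c j) + ∑ j, A s j • βf a (b * c) j := by
          rw [← Finset.sum_add_distrib]
          exact Finset.sum_congr rfl fun j _ => smul_add _ _ _
  let γ : Fin n → Cocycle ρ := fun i =>
    { f := fun g h => Γ g h (Sum.inl i)
      cocyc := fun a b c => hΓcoc a b c (Sum.inl i)
      one_left := fun h => hΓ1l h (Sum.inl i)
      one_right := fun h => hΓ1r h (Sum.inl i) }
  let δ : Cocycle (Stmt18Aux.actPi ρ k) :=
    { f := fun g h j => Γ g h (Sum.inr j)
      cocyc := fun a b c => funext fun j => hΓcoc a b c (Sum.inr j)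
      one_left := fun h => funext fun j => hΓ1l h (Sum.inr j)
      one_right := fun h => funext fun j => hΓ1r h (Sum.inr j) }
  -- membership in the kernel gives coboundaries
  have hNcb : ∀ x : Fin m → ZMod p, x ∈ N → IsCoboundary ρ (ℓ x) := by
    intro x hx
    have h2 : Cb.mkQ (ℓ x) = 0 := hx
    rw [Submodule.mkQ_apply, Submodule.Quotient.mk_eq_zero] at h2
    exact h2
  have hinrN : ∀ j, (b (Sum.inr j) : Fin m → ZMod p) ∈ N := by
    intro j
    rw [hbinr]
    exact (bN j).2
  have hcbinr : ∀ j : Fin k, IsCoboundary ρ (fun g h => Γ g h (Sum.inr j)) := by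
    intro j
    exact hNcb _ (hinrN j)
  choose lam hlamdata using hcbinr
  have hlam1 : ∀ j, lam j 1 = 0 := fun j => (hlamdata j).1
  have hlam2 : ∀ (j) (g h : H),
      Γ g h (Sum.inr j) = ρ.act h (lam j g) + lam j h - lam j (g * h) :=
    fun j g h => (hlamdata j).2 g h
  -- linear independence of the classes of the γ i
  have hindep : ∀ c : Fin n → ZMod p,
      IsCoboundary ρ (fun a b => ∑ i, c i • (γ i).f a b) → c = 0 := by
    intro c hc
    set x : Fin m → ZMod p := ∑ i, c i • (b (Sum.inl i) : Fin m → ZMod p) with hxdef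
    have hxj : ∀ j, x j = ∑ i, c i * A (Sum.inl i) j := by
      intro j
      rw [hxdef]
      simp [Finset.sum_apply]; rfl
    have hℓx : ℓ x = fun a b => ∑ i, c i • (γ i).f a b := by
      funext a b
      show ∑ j, x j • βf a b j = ∑ i, c i • (γ i).f a b
      calc ∑ j, x j • βf a b j
          = ∑ j, ∑ i, (c i * A (Sum.inl i) j) • βf a b j := by
            refine Finset.sum_congr rfl fun j _ => ?_
            rw [hxj j, Finset.sum_smul]
        _ = ∑ i, ∑ j, (c i * A (Sum.inl i) j) • βf a b j := Finset.sum_comm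
        _ = ∑ i, c i • (γ i).f a b := by
            refine Finset.sum_congr rfl fun i _ => ?_
            show _ = c i • ∑ j, A (Sum.inl i) j • βf a b j
            rw [Finset.smul_sum]
            exact Finset.sum_congr rfl fun j _ => mul_smul _ _ _
    have hxN : x ∈ N := by
      show Cb.mkQ (ℓ x) = 0
      rw [Submodule.mkQ_apply, Submodule.Quotient.mk_eq_zero, hℓx]
      exact hc
    have hxC : x ∈ C := by
      rw [hxdef]
      exact Submodule.sum_mem _ fun i _ =>
        Submodule.smul_mem _ _ (by rw [hbinl]; exact (bC i).2)
    have hx0 : x = 0 := (Submodule.disjoint_def.mp hNC.disjoint) x hxN hxC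
    have hli := b.linearIndependent.comp Sum.inl Sum.inl_injective
    have h3 := Fintype.linearIndependent_iff.mp hli c (by
      show ∑ i : Fin n, c i • b (Sum.inl i) = 0
      rw [← hxdef]
      exact hx0)
    funext i
    exact h3 i
  -- finiteness
  have hkm : k ≤ m := by
    have h1 := Submodule.finrank_le N
    rwa [Module.finrank_fin_fun] at h1
  haveI hKfin : Finite (Fin m → V) := Finite.of_equiv _ φ
  haveI hVfin : Finite (Fin k → V) := by
    rcases Nat.eq_zero_or_pos k with hk0 | hkpos
    · haveI : IsEmpty (Fin k) := by rw [hk0]; infer_instance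
      exact Finite.of_subsingleton
    · have hm : 0 < m := lt_of_lt_of_le hkpos hkm
      haveI : Finite V := Finite.of_injective (fun v : V => fun _ : Fin m => v)
        (fun v w h => congrFun h ⟨0, hm⟩)
      infer_instance
  -- the split extension
  have hkerS : ∀ x : GrpExt (Stmt18Aux.actPi ρ k) δ,
      x ∈ (epsHom (Stmt18Aux.actPi ρ k) δ).ker ↔ x.1 = 1 := fun x => MonoidHom.mem_ker
  let sec : H →* GrpExt (Stmt18Aux.actPi ρ k) δ :=
    { toFun := fun h => (h, fun j => -(lam j h))
      map_one' := by
        refine GrpExt.ext' rfl ?_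
        show (fun j => -(lam j 1)) = 0
        funext j
        rw [hlam1 j, neg_zero]
        rfl
      map_mul' := by
        intro g h
        refine GrpExt.ext' rfl ?_
        show (fun j => -(lam j (g * h))) =
          (Stmt18Aux.actPi ρ k).act h (fun j => -(lam j g)) + (fun j => -(lam j h)) + δ.f g h
        funext j
        show -(lam j (g * h)) =
          ρ.act h (-(lam j g)) + -(lam j h) + Γ g h (Sum.inr j)
        rw [hlam2 j g h, map_neg]
        abel }
  have secval : ∀ h : H, sec h = ((h, fun j => -(lam j h)) : GrpExt (Stmt18Aux.actPi ρ k) δ) :=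
    fun h => rfl
  have hker_comm : ∀ a b : (epsHom (Stmt18Aux.actPi ρ k) δ).ker, a * b = b * a := by
    intro a b
    have ha : (a : GrpExt (Stmt18Aux.actPi ρ k) δ).1 = 1 := (hkerS _).mp a.2
    have hb : (b : GrpExt (Stmt18Aux.actPi ρ k) δ).1 = 1 := (hkerS _).mp b.2
    apply Subtype.ext
    show (a : GrpExt (Stmt18Aux.actPi ρ k) δ) * b = (b : GrpExt (Stmt18Aux.actPi ρ k) δ) * a
    rw [GrpExt.mul_def, GrpExt.mul_def, ha, hb]
    refine GrpExt.ext' rfl ?_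
    show (Stmt18Aux.actPi ρ k).act 1 (a : GrpExt (Stmt18Aux.actPi ρ k) δ).2 +
        (b : GrpExt (Stmt18Aux.actPi ρ k) δ).2 + δ.f 1 1 =
      (Stmt18Aux.actPi ρ k).act 1 (b : GrpExt (Stmt18Aux.actPi ρ k) δ).2 +
        (a : GrpExt (Stmt18Aux.actPi ρ k) δ).2 + δ.f 1 1
    rw [RAction.act_one_apply, RAction.act_one_apply]
    abel
  have hker_exp : ∀ x : (epsHom (Stmt18Aux.actPi ρ k) δ).ker, x ^ p = 1 := by
    intro x
    have hx1 : (x : GrpExt (Stmt18Aux.actPi ρ k) δ).1 = 1 := (hkerS _).mp x.2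
    have hpow : ∀ j : ℕ, ((x ^ j : (epsHom (Stmt18Aux.actPi ρ k) δ).ker) :
        GrpExt (Stmt18Aux.actPi ρ k) δ) =
        ((1 : H), j • (x : GrpExt (Stmt18Aux.actPi ρ k) δ).2) := by
      intro j
      induction j with
      | zero =>
        rw [pow_zero]
        exact GrpExt.ext' rfl (zero_nsmul _).symm
      | succ j ih =>
        rw [pow_succ]
        show ((x ^ j : (epsHom (Stmt18Aux.actPi ρ k) δ).ker) :
            GrpExt (Stmt18Aux.actPi ρ k) δ) * x = _
        rw [ih]
        refine GrpExt.ext' ?_ ?_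
        · show 1 * (x : GrpExt (Stmt18Aux.actPi ρ k) δ).1 = 1
          rw [hx1, one_mul]
        · show (Stmt18Aux.actPi ρ k).act (x : GrpExt (Stmt18Aux.actPi ρ k) δ).1
              (j • (x : GrpExt (Stmt18Aux.actPi ρ k) δ).2) +
              (x : GrpExt (Stmt18Aux.actPi ρ k) δ).2 +
              δ.f 1 (x : GrpExt (Stmt18Aux.actPi ρ k) δ).1 =
            (j + 1) • (x : GrpExt (Stmt18Aux.actPi ρ k) δ).2
          rw [hx1, δ.one_left 1, RAction.act_one_apply, succ_nsmul]
          abel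
    apply Subtype.ext
    rw [hpow p]
    refine GrpExt.ext' rfl ?_
    show p • (x : GrpExt (Stmt18Aux.actPi ρ k) δ).2 = 0
    rw [← Nat.cast_smul_eq_nsmul (ZMod p), ZMod.natCast_self, zero_smul]
  have hhomogS : IsVHomog ρ (epsHom (Stmt18Aux.actPi ρ k) δ) := by
    refine ⟨k,
      { toFun := fun x => (x : GrpExt (Stmt18Aux.actPi ρ k) δ).2
        invFun := fun w => ⟨((1 : H), w), (hkerS _).mpr rfl⟩
        left_inv := by
          intro x
          apply Subtype.ext
          exact GrpExt.ext' ((hkerS _).mp x.2).symm rfl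
        right_inv := fun w => rfl }, ?_, ?_⟩
    · intro a b
      have ha : (a : GrpExt (Stmt18Aux.actPi ρ k) δ).1 = 1 := (hkerS _).mp a.2
      have hb : (b : GrpExt (Stmt18Aux.actPi ρ k) δ).1 = 1 := (hkerS _).mp b.2
      show ((a : GrpExt (Stmt18Aux.actPi ρ k) δ) * b).2 = _
      rw [GrpExt.mul_def]
      show (Stmt18Aux.actPi ρ k).act (b : GrpExt (Stmt18Aux.actPi ρ k) δ).1
          (a : GrpExt (Stmt18Aux.actPi ρ k) δ).2 +
          (b : GrpExt (Stmt18Aux.actPi ρ k) δ).2 +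
          δ.f (a : GrpExt (Stmt18Aux.actPi ρ k) δ).1 (b : GrpExt (Stmt18Aux.actPi ρ k) δ).1 = _
      rw [ha, hb, δ.one_left 1, RAction.act_one_apply, add_zero]
      rfl
    · intro g x
      have hx1 : (x : GrpExt (Stmt18Aux.actPi ρ k) δ).1 = 1 := (hkerS _).mp x.2
      show (g⁻¹ * (x : GrpExt (Stmt18Aux.actPi ρ k) δ) * g).2 = _
      rw [Stmt18Aux.GrpExt.inv_def]
      show (Stmt18Aux.actPi ρ k).act g.1
          ((Stmt18Aux.actPi ρ k).act (x : GrpExt (Stmt18Aux.actPi ρ k) δ).1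
              ((Stmt18Aux.actPi ρ k).act g.1⁻¹ (-g.2 - δ.f g.1⁻¹ g.1)) +
            (x : GrpExt (Stmt18Aux.actPi ρ k) δ).2 +
            δ.f g.1⁻¹ (x : GrpExt (Stmt18Aux.actPi ρ k) δ).1) +
          g.2 + δ.f (g.1⁻¹ * (x : GrpExt (Stmt18Aux.actPi ρ k) δ).1) g.1 = _
      rw [hx1, δ.one_right g.1⁻¹, mul_one, RAction.act_one_apply, add_zero, map_add,
        RAction.act_act, inv_mul_cancel, RAction.act_one_apply]
      funext i
      show (-g.2 - δ.f g.1⁻¹ g.1) i + ((Stmt18Aux.actPi ρ k).act g.1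
          (x : GrpExt (Stmt18Aux.actPi ρ k) δ).2) i + g.2 i + δ.f g.1⁻¹ g.1 i =
        ρ.act g.1 ((x : GrpExt (Stmt18Aux.actPi ρ k) δ).2 i)
      show -(g.2 i) - δ.f g.1⁻¹ g.1 i + ρ.act g.1 ((x : GrpExt (Stmt18Aux.actPi ρ k) δ).2 i) +
          g.2 i + δ.f g.1⁻¹ g.1 i = _
      abel
  let T : SplitVHomogData p H V ρ :=
    { S := GrpExt (Stmt18Aux.actPi ρ k) δ
      grp := inferInstance
      fin := inferInstanceAs (Finite (H × (Fin k → V)))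
      πS := epsHom (Stmt18Aux.actPi ρ k) δ
      surj := fun h => ⟨((h : H), (0 : Fin k → V)), rfl⟩
      sec := ⟨sec, MonoidHom.ext fun h => rfl⟩
      ker_comm := hker_comm
      ker_exp := hker_exp
      homog := hhomogS }
  -- the embedding into the fiber product
  have hv1 : v 1 = 0 := by
    have hval : (⟨(σ (π 1))⁻¹ * 1, hkv 1⟩ : π.ker) = ⟨1, one_mem _⟩ := by
      apply Subtype.ext
      show (σ (π 1))⁻¹ * 1 = 1
      rw [map_one, hσ1]
      group
    calc v 1 = φ ⟨1, one_mem _⟩ := congrArg φ hval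
      _ = 0 := φ1
  have hAmap0 : ∀ s, Amap 0 s = 0 := by
    intro s
    show ∑ j, A s j • (0 : Fin m → V) j = 0
    simp
  have hWmul : ∀ (x y : E) (s), Amap (v (x * y)) s =
      ρ.act (π y) (Amap (v x) s) + Amap (v y) s + Γ (π x) (π y) s := by
    intro x y s
    rw [hKL x y]
    show ∑ j, A s j •
        (((fun i => ρ.act (π y) (v x i)) + v y + βf (π x) (π y)) j) = _
    simp only [Pi.add_apply]
    have h1 : ρ.act (π y) (Amap (v x) s) = ∑ j, A s j • ρ.act (π y) (v x j) := by
      show ρ.act (π y) (∑ j, A s j • v x j) = _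
      rw [map_sum]
      exact Finset.sum_congr rfl fun j _ => ρ.act_smul _ _ _
    calc ∑ j, A s j • (ρ.act (π y) (v x j) + v y j + βf (π x) (π y) j)
        = ∑ j, (A s j • ρ.act (π y) (v x j) + A s j • v y j +
            A s j • βf (π x) (π y) j) := by
          refine Finset.sum_congr rfl fun j _ => ?_
          rw [smul_add, smul_add]
      _ = ((∑ j, A s j • ρ.act (π y) (v x j)) + ∑ j, A s j • v y j) +
            ∑ j, A s j • βf (π x) (π y) j := by
          rw [Finset.sum_add_distrib, Finset.sum_add_distrib]
      _ = ρ.act (π y) (Amap (v x) s) + Amap (v y) s + Γ (π x) (π y) s := by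
          rw [h1]
  let ι : E →* (GrpExt (Stmt18Aux.actPi ρ k) δ) × (∀ i, GrpExt ρ (γ i)) :=
    { toFun := fun x => ((π x, fun j => Amap (v x) (Sum.inr j)),
        fun i => (π x, Amap (v x) (Sum.inl i)))
      map_one' := by
        refine Prod.ext ?_ ?_
        · refine GrpExt.ext' (map_one π) ?_
          show (fun j => Amap (v 1) (Sum.inr j)) = 0
          funext j
          rw [hv1]
          exact hAmap0 _
        · funext i
          refine GrpExt.ext' (map_one π) ?_
          show Amap (v 1) (Sum.inl i) = 0
          rw [hv1]
          exact hAmap0 _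
      map_mul' := by
        intro x y
        refine Prod.ext ?_ ?_
        · refine GrpExt.ext' (map_mul π x y) ?_
          funext j
          exact hWmul x y (Sum.inr j)
        · funext i
          refine GrpExt.ext' (map_mul π x y) ?_
          exact hWmul x y (Sum.inl i) }
  have hιval : ∀ x : E, ι x = ((π x, fun j => Amap (v x) (Sum.inr j)),
      fun i => (π x, Amap (v x) (Sum.inl i))) := fun x => rfl
  have hinj : Function.Injective ι := by
    intro x y hxy
    have h1 : π x = π y := congrArg (fun z => z.1.1) hxy
    have h2 : ∀ s, Amap (v x) s = Amap (v y) s := by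
      intro s
      cases s with
      | inl i => exact congrArg (fun z => (z.2 i).2) hxy
      | inr j => exact congrArg (fun z => z.1.2 j) hxy
    have h3 : v x = v y := by
      have h4 := congrArg Bmap (funext h2)
      rwa [hBA, hBA] at h4
    have h5 := φ.injective
      (show φ ⟨(σ (π x))⁻¹ * x, hkv x⟩ = φ ⟨(σ (π y))⁻¹ * y, hkv y⟩ from h3)
    have h6 : (σ (π x))⁻¹ * x = (σ (π y))⁻¹ * y := congrArg Subtype.val h5
    rw [h1] at h6
    exact mul_left_cancel h6
  have hrange : Set.range ι = {z : (GrpExt (Stmt18Aux.actPi ρ k) δ) × (∀ i, GrpExt ρ (γ i)) |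
      ∀ i, epsHom ρ (γ i) (z.2 i) = epsHom (Stmt18Aux.actPi ρ k) δ z.1} := by
    apply Set.eq_of_subset_of_subset
    · rintro z ⟨x, rfl⟩
      intro i
      rfl
    · rintro z hz
      set w : (Fin n ⊕ Fin k) → V := Sum.elim (fun i => (z.2 i).2) z.1.2 with hwdef
      set kk : π.ker := φ.symm (Bmap w) with hkkdef
      refine ⟨σ z.1.1 * (kk : E), ?_⟩
      have hπe : π (σ z.1.1 * (kk : E)) = z.1.1 := by
        rw [map_mul, hσ, MonoidHom.mem_ker.mp kk.2, mul_one]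
      have hve : v (σ z.1.1 * (kk : E)) = Bmap w := by
        have hval : (⟨(σ (π (σ z.1.1 * (kk : E))))⁻¹ * (σ z.1.1 * (kk : E)),
            hkv _⟩ : π.ker) = kk := by
          apply Subtype.ext
          show (σ (π (σ z.1.1 * (kk : E))))⁻¹ * (σ z.1.1 * (kk : E)) = (kk : E)
          rw [hπe]
          group
        calc v (σ z.1.1 * (kk : E)) = φ kk := congrArg φ hval
          _ = Bmap w := by rw [hkkdef]; exact φ.apply_symm_apply _
      have hAve : ∀ s, Amap (v (σ z.1.1 * (kk : E))) s = w s := by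
        intro s
        rw [hve]
        exact congrFun (hAB w) s
      rw [hιval]
      refine Prod.ext ?_ ?_
      · refine GrpExt.ext' (ρ := Stmt18Aux.actPi ρ k) (γ := δ) hπe ?_
        show (fun j => Amap (v (σ z.1.1 * (kk : E))) (Sum.inr j)) = z.1.2
        funext j
        rw [hAve (Sum.inr j)]
        rfl
      · funext i
        show ((π (σ z.1.1 * (kk : E)), Amap (v (σ z.1.1 * (kk : E))) (Sum.inl i)) :
          GrpExt ρ (γ i)) = z.2 i
        refine GrpExt.ext' (ρ := ρ) (γ := γ i) ?_ ?_
        · rw [hπe]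
          exact (hz i).symm
        · show Amap (v (σ z.1.1 * (kk : E))) (Sum.inl i) = (z.2 i).2
          rw [hAve (Sum.inl i)]
          rfl
  exact ⟨n, γ, hindep, T, ι, hinj, hrange, fun x => rfl⟩
end
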